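/- arXiv:1704.07326 — 8 statements merged into one kernel-verified Lean document; each statement's English description precedes it below -/
import Mathlib

section
/- For every nonnegative function f in L^2(X,μ) on a probability space (X,μ), the variance ‖f − μ(f)‖₂² is at most the integral over a ∈ [0,∞) of μ({f² ≥ a})·(1 − μ({f² ≥ a})). -/
open MeasureTheory

/-- For a nonnegative square-integrable function `f` on a probability space `(X, μ)`,
the variance `‖f - μ(f)‖₂²` is at most
`∫_0^∞ μ {f² ≥ a} · (1 - μ {f² ≥ a}) da`. -/
theorem stmt2 {X : Type*} [MeasurableSpace X] (μ : Measure X) [IsProbabilityMeasure μ]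
    (f : X → ℝ) (hmeas : Measurable f) (hf : MemLp f 2 μ) (hpos : ∀ x, 0 ≤ f x) :
    ∫ x, (f x - ∫ y, f y ∂μ) ^ 2 ∂μ
      ≤ ∫ a in Set.Ioi (0 : ℝ),
          (μ {x | a ≤ (f x) ^ 2}).toReal * (1 - (μ {x | a ≤ (f x) ^ 2}).toReal) := by
  set A : ℝ := ∫ y, f y ∂μ with hA
  have hint : Integrable f μ := hf.integrable one_le_two
  have hsq : Integrable (fun x => f x ^ 2) μ := hf.integrable_sq
  set p : ℝ → ℝ := fun a => (μ {x | a ≤ (f x) ^ 2}).toReal with hp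
  -- measurability of p
  have hanti : Antitone fun a : ℝ => μ {x | a ≤ (f x) ^ 2} :=
    fun s t hst => measure_mono fun x hx => le_trans hst hx
  have pmble : Measurable p := Measurable.ennreal_toReal hanti.measurable
  -- p ≤ 1, p ≥ 0
  have hp01 : ∀ a, 0 ≤ p a ∧ p a ≤ 1 := by
    intro a
    refine ⟨ENNReal.toReal_nonneg, ?_⟩
    simpa using ENNReal.toReal_mono ENNReal.one_ne_top (prob_le_one (μ := μ))
  -- layer cake for f²
  have hsq_nn : 0 ≤ᵐ[μ] fun x => f x ^ 2 := Filter.Eventually.of_forall fun x => sq_nonneg _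
  have layer : ∫ x, f x ^ 2 ∂μ = ∫ a in Set.Ioi (0:ℝ), p a :=
    hsq.integral_eq_integral_meas_le hsq_nn
  -- integrability of p on Ioi 0
  have hlint : ∫⁻ a in Set.Ioi (0:ℝ), μ {x | a ≤ (f x) ^ 2} < ⊤ := by
    rw [← lintegral_eq_lintegral_meas_le μ hsq_nn (hmeas.pow_const 2).aemeasurable]
    exact hsq.lintegral_lt_top
  have p_int : Integrable p ((volume : Measure ℝ).restrict (Set.Ioi 0)) := by
    refine ⟨pmble.aestronglyMeasurable, ?_⟩
    rw [hasFiniteIntegral_iff_ofReal (Filter.Eventually.of_forall fun a => (hp01 a).1)]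
    calc ∫⁻ a in Set.Ioi (0:ℝ), ENNReal.ofReal (p a)
        ≤ ∫⁻ a in Set.Ioi (0:ℝ), μ {x | a ≤ (f x) ^ 2} :=
          lintegral_mono fun a => ENNReal.ofReal_toReal_le
      _ < ⊤ := hlint
  have psq_int : Integrable (fun a => p a * p a) ((volume : Measure ℝ).restrict (Set.Ioi 0)) := by
    refine p_int.mono (pmble.mul pmble).aestronglyMeasurable
      (Filter.Eventually.of_forall fun a => ?_)
    rw [Real.norm_eq_abs, Real.norm_eq_abs, abs_of_nonneg (hp01 a).1,
      abs_of_nonneg (mul_nonneg (hp01 a).1 (hp01 a).1)]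
    nlinarith [(hp01 a).1, (hp01 a).2
      ]
  -- LHS = ∫ f² - A²
  have expand : ∫ x, (f x - A) ^ 2 ∂μ = (∫ x, f x ^ 2 ∂μ) - A ^ 2 := by
    have : ∀ x, (f x - A) ^ 2 = f x ^ 2 - (2 * A) * f x + A ^ 2 := fun x => by ring
    simp_rw [this]
    have h1 : Integrable (fun x => f x ^ 2 - 2 * A * f x) μ := by
      exact hsq.sub (hint.const_mul (2 * A))
    rw [integral_add h1 (integrable_const _),
      integral_sub hsq (hint.const_mul (2 * A)), integral_const_mul, integral_const]
    simp [← hA]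
    ring
  -- the min function on the product
  set g : X × X → ℝ := fun z => min (f z.1) (f z.2) ^ 2 with hg
  have g_nn : ∀ z, 0 ≤ g z := fun z => sq_nonneg _
  have g_le : ∀ z : X × X, g z ≤ f z.1 * f z.2 := by
    intro z
    have h1 : min (f z.1) (f z.2) ≤ f z.1 := min_le_left _ _
    have h2 : min (f z.1) (f z.2) ≤ f z.2 := min_le_right _ _
    have h0 : 0 ≤ min (f z.1) (f z.2) := le_min (hpos _) (hpos _)
    have : min (f z.1) (f z.2) * min (f z.1) (f z.2) ≤ f z.1 * f z.2 :=
      mul_le_mul h1 h2 h0 (hpos _)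
    calc g z = min (f z.1) (f z.2) * min (f z.1) (f z.2) := by rw [hg]; ring
      _ ≤ f z.1 * f z.2 := this
  have prod_int : Integrable (fun z : X × X => f z.1 * f z.2) (μ.prod μ) :=
    hint.mul_prod hint
  have g_mble : Measurable g :=
    ((hmeas.comp measurable_fst).min (hmeas.comp measurable_snd)).pow_const 2
  have g_int : Integrable g (μ.prod μ) := by
    refine prod_int.mono g_mble.aestronglyMeasurable (Filter.Eventually.of_forall fun z => ?_)
    rw [Real.norm_eq_abs, abs_of_nonneg (g_nn z), Real.norm_eq_abs,
      abs_of_nonneg (mul_nonneg (hpos _) (hpos _))]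
    exact g_le z
  -- superlevel sets of g
  have level_eq : ∀ a : ℝ, {z : X × X | a ≤ g z}
      = {x | a ≤ (f x) ^ 2} ×ˢ {x | a ≤ (f x) ^ 2} := by
    intro a
    ext z
    simp only [Set.mem_setOf_eq, Set.mem_prod, hg]
    have h0 : 0 ≤ min (f z.1) (f z.2) := le_min (hpos _) (hpos _)
    have key : min (f z.1) (f z.2) ^ 2 = min ((f z.1) ^ 2) ((f z.2) ^ 2) := by
      rcases le_total (f z.1) (f z.2) with h | h
      · rw [min_eq_left h, min_eq_left (by nlinarith [hpos z.1])]
      · rw [min_eq_right h, min_eq_right (by nlinarith [hpos z.2])]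
    rw [key]
    exact le_min_iff
  -- layer cake for g
  have layer_g : ∫ z, g z ∂(μ.prod μ) = ∫ a in Set.Ioi (0:ℝ), p a * p a := by
    rw [g_int.integral_eq_integral_meas_le (Filter.Eventually.of_forall g_nn)]
    refine setIntegral_congr_fun measurableSet_Ioi fun a _ => ?_
    rw [level_eq a, measureReal_def, Measure.prod_prod, ENNReal.toReal_mul]
  -- ∫ g ≤ A²
  have g_bound : ∫ z, g z ∂(μ.prod μ) ≤ A ^ 2 := by
    have := integral_mono g_int prod_int g_le
    rwa [integral_prod_mul, ← hA, ← sq] at this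
  -- put everything together
  have rhs_eq : ∫ a in Set.Ioi (0:ℝ), p a * (1 - p a)
      = (∫ a in Set.Ioi (0:ℝ), p a) - ∫ a in Set.Ioi (0:ℝ), p a * p a := by
    rw [← integral_sub p_int psq_int]
    exact integral_congr_ae (Filter.Eventually.of_forall fun a => by ring)
  calc ∫ x, (f x - A) ^ 2 ∂μ = (∫ x, f x ^ 2 ∂μ) - A ^ 2 := expand
    _ ≤ (∫ a in Set.Ioi (0:ℝ), p a) - ∫ a in Set.Ioi (0:ℝ), p a * p a := by
        rw [← layer]
        have := g_bound
        rw [layer_g] at this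
        linarith
    _ = ∫ a in Set.Ioi (0:ℝ), p a * (1 - p a) := rhs_eq.symm
end

section
/- For every nonnegative function f in L^2(X,μ) on a probability space (X,μ), the integral over a ∈ [0,∞) of μ({f² ≥ a})² is at most (∫_X f dμ)². -/
open MeasureTheory

lemma aux_integrableOn {α : Type*} [MeasurableSpace α] (ν : Measure α) [IsFiniteMeasure ν]
    {g : α → ℝ} (hg : Integrable g ν) (hnn : 0 ≤ᵐ[ν] g) :
    IntegrableOn (fun t => (ν {a | t ≤ g a}).toReal) (Set.Ioi (0:ℝ)) := by
  constructor
  · exact ((Antitone.measurable (fun s t hst => measure_mono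
      (fun a (h : a ∈ {b | t ≤ g b}) => hst.trans h))).ennreal_toReal).aestronglyMeasurable
  · rw [hasFiniteIntegral_iff_ofReal (Filter.Eventually.of_forall
      fun t => ENNReal.toReal_nonneg)]
    calc ∫⁻ t in Set.Ioi (0:ℝ), ENNReal.ofReal ((ν {a | t ≤ g a}).toReal)
        = ∫⁻ t in Set.Ioi (0:ℝ), ν {a | t ≤ g a} :=
          lintegral_congr fun t => ENNReal.ofReal_toReal (measure_ne_top _ _)
      _ = ∫⁻ ω, ENNReal.ofReal (g ω) ∂ν :=
          (lintegral_eq_lintegral_meas_le ν hnn hg.aemeasurable).symm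
      _ < ⊤ := hg.lintegral_lt_top

/-- For a nonnegative square-integrable function `f` on a probability space `(X, μ)`,
the integral over `a ∈ (0, ∞)` of `μ {f² ≥ a}²` is at most `(∫ f dμ)²`. -/
theorem stmt3 {X : Type*} [MeasurableSpace X] (μ : Measure X) [IsProbabilityMeasure μ]
    (f : X → ℝ) (hmeas : Measurable f) (hf : MemLp f 2 μ) (hpos : ∀ x, 0 ≤ f x) :
    ∫ a in Set.Ioi (0 : ℝ), ((μ {x | a ≤ (f x) ^ 2}).toReal) ^ 2
      ≤ (∫ x, f x ∂μ) ^ 2 := by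
  have hint : Integrable f μ := hf.integrable one_le_two
  have hg : Integrable (fun p : X × X => f p.1 * f p.2) (μ.prod μ) :=
    hint.mul_prod hint
  have hgnn : 0 ≤ᵐ[μ.prod μ] fun p : X × X => f p.1 * f p.2 :=
    Filter.Eventually.of_forall fun p => mul_nonneg (hpos _) (hpos _)
  have key : (∫ x, f x ∂μ) ^ 2
      = ∫ t in Set.Ioi (0:ℝ), ((μ.prod μ) {p : X × X | t ≤ f p.1 * f p.2}).toReal := by
    change _ = ∫ t in Set.Ioi (0:ℝ), (μ.prod μ).real {p : X × X | t ≤ f p.1 * f p.2}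
    rw [← hg.integral_eq_integral_meas_le hgnn, integral_prod_mul, sq]
  rw [key]
  apply integral_mono_of_nonneg
  · exact Filter.Eventually.of_forall fun a => sq_nonneg _
  · exact aux_integrableOn (μ.prod μ) hg hgnn
  · filter_upwards [self_mem_ae_restrict measurableSet_Ioi] with a (ha : 0 < a)
    have hsub : {x | a ≤ (f x) ^ 2} ×ˢ {x | a ≤ (f x) ^ 2}
        ⊆ {p : X × X | a ≤ f p.1 * f p.2} := by
      rintro ⟨x, y⟩ ⟨hx, hy⟩
      simp only [Set.mem_setOf_eq] at hx hy ⊢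
      nlinarith [hpos x, hpos y, ha.le, mul_le_mul hx hy ha.le (sq_nonneg (f x)), mul_nonneg (hpos x) (hpos y), sq_nonneg (f x * f y - a), sq_nonneg (f x * f y + a)]
    have h1 : (μ.prod μ) ({x | a ≤ (f x) ^ 2} ×ˢ {x | a ≤ (f x) ^ 2})
        ≤ (μ.prod μ) {p : X × X | a ≤ f p.1 * f p.2} := measure_mono hsub
    rw [Measure.prod_prod] at h1
    have hfin : (μ.prod μ) {p : X × X | a ≤ f p.1 * f p.2} ≠ ⊤ :=
      (measure_lt_top _ _).ne
    calc ((μ {x | a ≤ (f x) ^ 2}).toReal) ^ 2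
        = ((μ {x | a ≤ (f x) ^ 2}) * (μ {x | a ≤ (f x) ^ 2})).toReal := by
          rw [ENNReal.toReal_mul, sq]
      _ ≤ ((μ.prod μ) {p : X × X | a ≤ f p.1 * f p.2}).toReal :=
          ENNReal.toReal_mono hfin h1
end

section
/- Let (X,μ) be a standard probability space and θ₁,…,θₙ nonsingular automorphisms of X such that each Radon–Nikodym derivative d(μ∘θₖ)/dμ is bounded above and below by positive constants. If there is κ > 0 such that μ(A)(1−μ(A)) ≤ κ·Σₖ μ(A △ θₖ(A)) for all measurable sets A ⊂ X, then there is κ' > 0 such that ‖f − μ(f)‖₂ ≤ κ'·Σₖ ‖f∘θₖ⁻¹ − f‖₂ for all f ∈ L²(X,μ). -/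
open MeasureTheory

/-- A nonsingular automorphism `θ` of `(X, μ)` is `μ`-bounded if the Radon–Nikodym
derivative `d(μ ∘ θ)/dμ` is bounded above and below by positive constants; equivalently
`c • μ ≤ μ.map θ ≤ C • μ` for some `0 < c` and `C < ∞`. -/
def MuBounded {X : Type*} [MeasurableSpace X] (μ : Measure X) (θ : X ≃ᵐ X) : Prop :=
  ∃ c C : ENNReal, 0 < c ∧ C ≠ ⊤ ∧ c • μ ≤ μ.map θ ∧ μ.map θ ≤ C • μ

section Aux

open Set Filter

lemma exists_median {X : Type*} [MeasurableSpace X] (μ : Measure X) [IsProbabilityMeasure μ]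
    (f : X → ℝ) (hf : Measurable f) :
    ∃ m : ℝ, μ {x | m < f x} ≤ 1/2 ∧ μ {x | f x < m} ≤ 1/2 := by
  set S : Set ℝ := {t : ℝ | 1/2 ≤ μ {x | f x ≤ t}} with hS
  have hmono : ∀ {s t : ℝ}, s ≤ t → μ {x | f x ≤ s} ≤ μ {x | f x ≤ t} := by
    intro s t hst
    exact measure_mono (fun x hx => le_trans hx hst)
  have hSne : S.Nonempty := by
    by_contra hemp
    rw [Set.not_nonempty_iff_eq_empty, Set.eq_empty_iff_forall_notMem] at hemp
    simp only [hS, mem_setOf_eq, not_le] at hemp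
    have h1 : Tendsto (fun n : ℕ => μ {x | f x ≤ (n : ℝ)}) atTop
        (nhds (μ (⋃ n : ℕ, {x | f x ≤ (n : ℝ)}))) := by
      refine tendsto_measure_iUnion_atTop (fun a b hab x hx => ?_)
      simp only [mem_setOf_eq] at hx ⊢
      exact le_trans hx (by exact_mod_cast hab)
    have hU : (⋃ n : ℕ, {x | f x ≤ (n : ℝ)}) = univ := by
      ext x; simp only [mem_iUnion, mem_setOf_eq, mem_univ, iff_true]
      exact exists_nat_ge (f x)
    rw [hU, measure_univ] at h1
    have : (1 : ENNReal) ≤ 1/2 :=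
      le_of_tendsto h1 (Eventually.of_forall fun n => le_of_lt (hemp (n : ℝ)))
    norm_num at this
  have hSbdd : BddBelow S := by
    by_contra hbdd
    have h2 : Tendsto (fun n : ℕ => μ {x | f x ≤ -(n : ℝ)}) atTop
        (nhds (μ (⋂ n : ℕ, {x | f x ≤ -(n : ℝ)}))) := by
      refine tendsto_measure_iInter_atTop
        (fun n => (hf measurableSet_Iic).nullMeasurableSet) ?_ ⟨0, measure_ne_top _ _⟩
      intro a b hab x hx
      simp only [mem_setOf_eq] at hx ⊢
      refine le_trans hx (by simp; exact_mod_cast hab)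
    have hI : (⋂ n : ℕ, {x | f x ≤ -(n : ℝ)}) = ∅ := by
      ext x; simp only [mem_iInter, mem_setOf_eq, mem_empty_iff_false, iff_false, not_forall, not_le]
      obtain ⟨n, hn⟩ := exists_nat_gt (-f x)
      exact ⟨n, by linarith⟩
    rw [hI, measure_empty] at h2
    have hev : ∀ᶠ n : ℕ in atTop, μ {x | f x ≤ -(n : ℝ)} < 1/2 :=
      h2.eventually_lt_const (by norm_num)
    obtain ⟨N, hN⟩ := hev.exists
    apply hbdd
    refine ⟨-(N : ℝ), fun t ht => ?_⟩
    by_contra hlt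
    push_neg at hlt
    exact absurd (le_trans ht (hmono hlt.le)) (not_le.mpr hN)
  set m := sInf S with hm
  refine ⟨m, ?_, ?_⟩
  · -- μ {m < f} ≤ 1/2 : since μ {f ≤ m} ≥ 1/2
    have key : 1/2 ≤ μ {x | f x ≤ m} := by
      have h3 : Tendsto (fun n : ℕ => μ {x | f x ≤ m + 1/((n:ℝ)+1)}) atTop
          (nhds (μ (⋂ n : ℕ, {x | f x ≤ m + 1/((n:ℝ)+1)}))) := by
        refine tendsto_measure_iInter_atTop
          (fun n => (hf measurableSet_Iic).nullMeasurableSet) ?_ ⟨0, measure_ne_top _ _⟩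
        intro a b hab x hx
        simp only [mem_setOf_eq] at hx ⊢
        refine le_trans hx (by gcongr <;> exact_mod_cast hab)
      have hI : (⋂ n : ℕ, {x | f x ≤ m + 1/((n:ℝ)+1)}) = {x | f x ≤ m} := by
        ext x
        simp only [mem_iInter, mem_setOf_eq]
        constructor
        · intro h
          by_contra hc
          push_neg at hc
          obtain ⟨n, hn⟩ := exists_nat_one_div_lt (sub_pos.mpr hc)
          exact absurd (h n) (by push_neg; linarith)
        · intro h n
          have : (0:ℝ) < 1/((n:ℝ)+1) := by positivity
          linarith
      rw [hI] at h3
      refine ge_of_tendsto h3 (Eventually.of_forall fun n => ?_)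
      have hpos : (0:ℝ) < 1/((n:ℝ)+1) := by positivity
      obtain ⟨s, hsS, hslt⟩ := Real.lt_sInf_add_pos hSne hpos
      exact le_trans hsS (hmono (le_of_lt (by rw [hm]; linarith)))
    have hcompl : {x | m < f x} = {x | f x ≤ m}ᶜ := by
      ext x; simp [not_le]
    have hms : MeasurableSet {x | f x ≤ m} := hf measurableSet_Iic
    rw [hcompl, measure_compl hms (measure_ne_top _ _), measure_univ]
    calc (1:ENNReal) - μ {x | f x ≤ m} ≤ 1 - 1/2 := by
          exact tsub_le_tsub_left key 1
      _ = 1/2 := by norm_num [ENNReal.sub_half]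
  · -- μ {f < m} ≤ 1/2
    have h4 : Tendsto (fun n : ℕ => μ {x | f x ≤ m - 1/((n:ℝ)+1)}) atTop
        (nhds (μ (⋃ n : ℕ, {x | f x ≤ m - 1/((n:ℝ)+1)}))) := by
      refine tendsto_measure_iUnion_atTop (fun a b hab x hx => ?_)
      simp only [mem_setOf_eq] at hx ⊢
      refine le_trans hx (by gcongr <;> exact_mod_cast hab)
    have hU : (⋃ n : ℕ, {x | f x ≤ m - 1/((n:ℝ)+1)}) = {x | f x < m} := by
      ext x
      simp only [mem_iUnion, mem_setOf_eq]
      constructor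
      · rintro ⟨n, hn⟩
        have : (0:ℝ) < 1/((n:ℝ)+1) := by positivity
        linarith
      · intro h
        obtain ⟨n, hn⟩ := exists_nat_one_div_lt (sub_pos.mpr h)
        exact ⟨n, by linarith⟩
    rw [hU] at h4
    refine le_of_tendsto h4 (Eventually.of_forall fun n => ?_)
    have hpos : (0:ℝ) < 1/((n:ℝ)+1) := by positivity
    have hnotS : m - 1/((n:ℝ)+1) ∉ S := fun hmem =>
      absurd (csInf_le hSbdd hmem) (by push_neg; rw [← hm] at *; linarith)
    simp only [hS, mem_setOf_eq, not_le] at hnotS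
    exact hnotS.le

/-- Layer-cake for symmetric differences: for nonneg measurable `a b`,
`∫⁻ t in Ioi 0, μ ({t < a} ∆ {t < b}) = ∫⁻ |a - b|`. -/
lemma layercake_symmDiff {X : Type*} [MeasurableSpace X] (μ : Measure X) [SFinite μ]
    (a b : X → ℝ) (ha : Measurable a) (hb : Measurable b)
    (ha0 : ∀ x, 0 ≤ a x) (hb0 : ∀ x, 0 ≤ b x) :
    ∫⁻ t in Ioi (0:ℝ), μ (symmDiff {x | t < a x} {x | t < b x})
      = ∫⁻ x, ENNReal.ofReal |a x - b x| ∂μ := by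
  set S : Set (ℝ × X) := symmDiff {p : ℝ × X | p.1 < a p.2} {p : ℝ × X | p.1 < b p.2} with hSdef
  have hS : MeasurableSet S := by
    have h1 : MeasurableSet {p : ℝ × X | p.1 < a p.2} :=
      measurableSet_lt measurable_fst (ha.comp measurable_snd)
    have h2 : MeasurableSet {p : ℝ × X | p.1 < b p.2} :=
      measurableSet_lt measurable_fst (hb.comp measurable_snd)
    exact h1.symmDiff h2
  have hslicet : ∀ t : ℝ, Prod.mk t ⁻¹' S = symmDiff {x | t < a x} {x | t < b x} := by
    intro t
    rw [hSdef, Set.preimage_symmDiff]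
    rfl
  have hslicex : ∀ x : X, (fun t => (t, x)) ⁻¹' S = symmDiff (Iio (a x)) (Iio (b x)) := by
    intro x
    rw [hSdef, Set.preimage_symmDiff]
    rfl
  -- write LHS as double integral of indicator
  have hL : ∫⁻ t in Ioi (0:ℝ), μ (symmDiff {x | t < a x} {x | t < b x})
      = ∫⁻ t in Ioi (0:ℝ), ∫⁻ x, S.indicator 1 (t, x) ∂μ := by
    refine lintegral_congr fun t => ?_
    have : (fun x => S.indicator 1 (t, x)) = (Prod.mk t ⁻¹' S).indicator (fun _ => (1:ENNReal)) := by
      ext x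
      by_cases hx : (t, x) ∈ S <;>
        simp [Set.indicator, hx, Set.mem_preimage]
    rw [this, lintegral_indicator (hS.preimage measurable_prodMk_left), setLIntegral_one,
      hslicet]
  rw [hL]
  have hswap : ∫⁻ t in Ioi (0:ℝ), ∫⁻ x, S.indicator 1 (t, x) ∂μ
      = ∫⁻ x, (∫⁻ t in Ioi (0:ℝ), S.indicator 1 (t, x)) ∂μ := by
    refine lintegral_lintegral_swap ?_
    exact ((measurable_one.indicator hS).comp measurable_id).aemeasurable
  rw [hswap]
  refine lintegral_congr fun x => ?_
  have : (fun t => S.indicator 1 (t, x)) = ((fun t => (t, x)) ⁻¹' S).indicator (fun _ => (1:ENNReal)) := by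
    ext t
    by_cases ht : (t, x) ∈ S <;> simp [Set.indicator, ht, Set.mem_preimage]
  rw [this, lintegral_indicator, setLIntegral_one, hslicex]
  swap
  · exact hS.preimage (measurable_id.prodMk measurable_const)
  -- now compute volume ((Iio A ∆ Iio B) ∩ Ioi 0) = ofReal |A - B|
  have key : ∀ A B : ℝ, 0 ≤ A → 0 ≤ B → A ≤ B →
      (volume.restrict (Ioi (0:ℝ))) (symmDiff (Iio A) (Iio B)) = ENNReal.ofReal |A - B| := by
    intro A B hA hB hAB
    rw [Measure.restrict_apply (by measurability : MeasurableSet (symmDiff (Iio A) (Iio B)))]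
    have hsd : symmDiff (Iio A) (Iio B) = Ico A B := by
      rw [symmDiff_def]
      simp only [Set.sup_eq_union]
      rw [show Iio A \ Iio B = ∅ from by rw [diff_eq_empty]; exact Iio_subset_Iio hAB,
        show Iio B \ Iio A = Ico A B from by ext t; simp [and_comm], Set.empty_union]
    rw [hsd]
    have h1 : volume (Ico A B ∩ Ioi 0) ≤ ENNReal.ofReal (B - A) := by
      refine le_trans (measure_mono (inter_subset_left)) ?_
      simp [Real.volume_Ico]
    have h2 : ENNReal.ofReal (B - A) ≤ volume (Ico A B ∩ Ioi 0) := by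
      have : Ioo A B ⊆ Ico A B ∩ Ioi 0 := fun t ht =>
        ⟨⟨ht.1.le, ht.2⟩, lt_of_le_of_lt hA ht.1⟩
      have h3 := measure_mono (μ := volume) this
      rwa [Real.volume_Ioo] at h3
    rw [abs_sub_comm, abs_of_nonneg (by linarith)]
    exact le_antisymm h1 h2
  rcases le_total (a x) (b x) with h | h
  · exact key _ _ (ha0 x) (hb0 x) h
  · rw [symmDiff_comm, abs_sub_comm]
    exact key _ _ (hb0 x) (ha0 x) h

lemma map_symm_le {X : Type*} [MeasurableSpace X] (μ : Measure X) [IsProbabilityMeasure μ]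
    (θ : X ≃ᵐ X) (c : ENNReal) (hc0 : c ≠ 0) (hcle : c • μ ≤ μ.map θ) :
    μ.map θ.symm ≤ c⁻¹ • μ := by
  have h1 : (c • μ).map θ.symm ≤ (μ.map θ).map θ.symm :=
    Measure.map_mono hcle θ.symm.measurable
  rw [Measure.map_map θ.symm.measurable θ.measurable] at h1
  have h2 : (θ.symm : X → X) ∘ θ = id := by ext x; simp
  rw [h2, Measure.map_id, Measure.map_smul] at h1
  intro s
  have h3 := h1 s
  simp only [Measure.smul_apply, smul_eq_mul] at h3 ⊢
  rw [← ENNReal.div_eq_inv_mul]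
  rw [ENNReal.le_div_iff_mul_le (Or.inl hc0) (Or.inr (measure_ne_top μ s))]
  rw [mul_comm]; exact h3

lemma lintegral_comp_symm_le {X : Type*} [MeasurableSpace X] (μ : Measure X)
    [IsProbabilityMeasure μ] (θ : X ≃ᵐ X) (c : ENNReal) (hc0 : c ≠ 0)
    (hcle : c • μ ≤ μ.map θ) (g : X → ENNReal) (hg : Measurable g) :
    ∫⁻ x, g (θ.symm x) ∂μ ≤ c⁻¹ * ∫⁻ x, g x ∂μ := by
  have h1 : ∫⁻ x, g (θ.symm x) ∂μ = ∫⁻ y, g y ∂(μ.map θ.symm) :=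
    (lintegral_map hg θ.symm.measurable).symm
  rw [h1]
  calc ∫⁻ y, g y ∂(μ.map θ.symm) ≤ ∫⁻ y, g y ∂(c⁻¹ • μ) :=
        lintegral_mono' (map_symm_le μ θ c hc0 hcle) le_rfl
    _ = c⁻¹ * ∫⁻ y, g y ∂μ := lintegral_smul_measure _ _

lemma ae_comp_symm {X : Type*} [MeasurableSpace X] (μ : Measure X) [IsProbabilityMeasure μ]
    (θ : X ≃ᵐ X) (c : ENNReal) (hc0 : c ≠ 0) (hcle : c • μ ≤ μ.map θ)
    {f g : X → ℝ} (hfg : f =ᵐ[μ] g) :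
    (fun x => f (θ.symm x)) =ᵐ[μ] (fun x => g (θ.symm x)) := by
  have hac : μ.map θ.symm ≪ μ :=
    (Measure.absolutelyContinuous_of_le (map_symm_le μ θ c hc0 hcle)).trans
      Measure.smul_absolutelyContinuous
  have h1 : ∀ᵐ y ∂(μ.map θ.symm), f y = g y := hac.ae_le hfg
  exact ae_of_ae_map θ.symm.measurable.aemeasurable h1

lemma core_cheeger {X : Type*} [MeasurableSpace X] (μ : Measure X) [IsProbabilityMeasure μ]
    {n : ℕ} (θ : Fin n → X ≃ᵐ X) (c : Fin n → ENNReal) (hc0 : ∀ k, c k ≠ 0)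
    (hcle : ∀ k, c k • μ ≤ μ.map (θ k))
    (κ : ℝ) (hκ : 0 < κ)
    (hsets : ∀ A : Set X, MeasurableSet A →
      (μ A).toReal * (1 - (μ A).toReal) ≤ κ * ∑ k, (μ (symmDiff A ((θ k) '' A))).toReal)
    (h : X → ℝ) (hh : Measurable h) (hh0 : ∀ x, 0 ≤ h x) (hh2 : MemLp h 2 μ)
    (hsmall : μ {x | 0 < h x} ≤ 1/2) :
    Real.sqrt (∫ x, h x ^ 2 ∂μ)
      ≤ 2 * κ * ∑ k, Real.sqrt (2 * (((c k)⁻¹).toReal + 1))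
          * Real.sqrt (∫ x, (h ((θ k).symm x) - h x) ^ 2 ∂μ) := by
  set E : ENNReal := ∫⁻ x, ENNReal.ofReal (h x ^ 2) ∂μ with hEdef
  set D : Fin n → ENNReal :=
    fun k => ∫⁻ x, ENNReal.ofReal ((h ((θ k).symm x) - h x) ^ 2) ∂μ with hDdef
  have hθmeas : ∀ k, Measurable fun x => h ((θ k).symm x) :=
    fun k => hh.comp (θ k).symm.measurable
  have hE_ne : E ≠ ⊤ := by
    have hint := hh2.integrable_sq
    have heq : E = ∫⁻ x, ↑‖h x ^ 2‖₊ ∂μ :=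
      lintegral_congr fun x => (Real.enorm_eq_ofReal (sq_nonneg _)).symm
    rw [heq]
    exact hint.2.ne
  -- pointwise square-sum bounds
  have hpt : ∀ p q : ℝ, ENNReal.ofReal ((p + q) ^ 2)
      ≤ 2 * ENNReal.ofReal (p ^ 2) + 2 * ENNReal.ofReal (q ^ 2) := by
    intro p q
    calc ENNReal.ofReal ((p + q) ^ 2) ≤ ENNReal.ofReal (2 * p ^ 2 + 2 * q ^ 2) :=
          ENNReal.ofReal_le_ofReal (by nlinarith [sq_nonneg (p - q)])
      _ = 2 * ENNReal.ofReal (p ^ 2) + 2 * ENNReal.ofReal (q ^ 2) := by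
          rw [ENNReal.ofReal_add (by positivity) (by positivity),
            ENNReal.ofReal_mul (by norm_num), ENNReal.ofReal_mul (by norm_num),
            ENNReal.ofReal_ofNat]
  have hpt' : ∀ p q : ℝ, ENNReal.ofReal ((p - q) ^ 2)
      ≤ 2 * ENNReal.ofReal (p ^ 2) + 2 * ENNReal.ofReal (q ^ 2) := by
    intro p q
    calc ENNReal.ofReal ((p - q) ^ 2) ≤ ENNReal.ofReal (2 * p ^ 2 + 2 * q ^ 2) :=
          ENNReal.ofReal_le_ofReal (by nlinarith [sq_nonneg (p + q)])
      _ = 2 * ENNReal.ofReal (p ^ 2) + 2 * ENNReal.ofReal (q ^ 2) := by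
          rw [ENNReal.ofReal_add (by positivity) (by positivity),
            ENNReal.ofReal_mul (by norm_num), ENNReal.ofReal_mul (by norm_num),
            ENNReal.ofReal_ofNat]
  have hT : ∀ k, ∫⁻ x, ENNReal.ofReal (h ((θ k).symm x) ^ 2) ∂μ ≤ (c k)⁻¹ * E :=
    fun k => lintegral_comp_symm_le μ (θ k) (c k) (hc0 k) (hcle k)
      (fun y => ENNReal.ofReal (h y ^ 2)) ((hh.pow_const 2).ennreal_ofReal)
  have haux : ∀ k (u : X → ℝ), Measurable u →
      (∀ x, ENNReal.ofReal (u x ^ 2) ≤ 2 * ENNReal.ofReal (h ((θ k).symm x) ^ 2)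
        + 2 * ENNReal.ofReal (h x ^ 2)) →
      ∫⁻ x, ENNReal.ofReal (u x ^ 2) ∂μ ≤ 2 * ((c k)⁻¹ + 1) * E := by
    intro k u hu hub
    calc ∫⁻ x, ENNReal.ofReal (u x ^ 2) ∂μ
        ≤ ∫⁻ x, (2 * ENNReal.ofReal (h ((θ k).symm x) ^ 2)
            + 2 * ENNReal.ofReal (h x ^ 2)) ∂μ := lintegral_mono hub
      _ = 2 * ∫⁻ x, ENNReal.ofReal (h ((θ k).symm x) ^ 2) ∂μ + 2 * E := by
          rw [lintegral_add_left (((hθmeas k).pow_const 2).ennreal_ofReal.const_mul 2),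
            lintegral_const_mul 2 ((hθmeas k).pow_const 2).ennreal_ofReal,
            lintegral_const_mul 2 ((hh.pow_const 2).ennreal_ofReal)]
      _ ≤ 2 * ((c k)⁻¹ * E) + 2 * E := by gcongr; exact hT k
      _ = 2 * ((c k)⁻¹ + 1) * E := by ring
  have hVbound : ∀ k, (∫⁻ x, ENNReal.ofReal ((h ((θ k).symm x) + h x) ^ 2) ∂μ)
      ≤ 2 * ((c k)⁻¹ + 1) * E :=
    fun k => haux k _ ((hθmeas k).add hh) (fun x => hpt _ _)
  have hDbound : ∀ k, D k ≤ 2 * ((c k)⁻¹ + 1) * E :=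
    fun k => haux k _ ((hθmeas k).sub hh) (fun x => hpt' _ _)
  have hcE_ne : ∀ k, 2 * ((c k)⁻¹ + 1) * E ≠ ⊤ := by
    intro k
    refine ENNReal.mul_ne_top (ENNReal.mul_ne_top (by norm_num) ?_) hE_ne
    exact ENNReal.add_ne_top.mpr ⟨ENNReal.inv_ne_top.mpr (hc0 k), ENNReal.one_ne_top⟩
  have hD_ne : ∀ k, D k ≠ ⊤ := fun k => ne_top_of_le_ne_top (hcE_ne k) (hDbound k)
  -- measurability of slice measures in t
  have hmeas_slice : ∀ k, Measurable (fun t : ℝ =>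
      μ (symmDiff {x | t < h x ^ 2} {x | t < h ((θ k).symm x) ^ 2})) := by
    intro k
    have hSk : MeasurableSet (symmDiff {p : ℝ × X | p.1 < h p.2 ^ 2}
        {p : ℝ × X | p.1 < h ((θ k).symm p.2) ^ 2}) := by
      refine MeasurableSet.symmDiff ?_ ?_
      · exact measurableSet_lt measurable_fst ((hh.comp measurable_snd).pow_const 2)
      · exact measurableSet_lt measurable_fst (((hθmeas k).comp measurable_snd).pow_const 2)
    have h2 := measurable_measure_prodMk_left (ν := μ) hSk
    have heq : (fun t : ℝ => μ (Prod.mk t ⁻¹' symmDiff {p : ℝ × X | p.1 < h p.2 ^ 2}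
        {p : ℝ × X | p.1 < h ((θ k).symm p.2) ^ 2}))
        = fun t : ℝ => μ (symmDiff {x | t < h x ^ 2} {x | t < h ((θ k).symm x) ^ 2}) := by
      funext t
      rw [Set.preimage_symmDiff]
      rfl
    rw [heq] at h2
    exact h2
  have step1 : E ≤ ENNReal.ofReal (2 * κ) * ∑ k, ∫⁻ t in Ioi (0:ℝ),
      μ (symmDiff {x | t < h x ^ 2} {x | t < h ((θ k).symm x) ^ 2}) := by
    have hlc : E = ∫⁻ t in Ioi (0:ℝ), μ {x | t < h x ^ 2} :=
      lintegral_eq_lintegral_meas_lt μ (ae_of_all _ fun x => sq_nonneg _)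
        ((hh.pow_const 2).aemeasurable)
    rw [hlc, ← lintegral_finset_sum _ (fun k _ => hmeas_slice k),
      ← lintegral_const_mul' _ _ ENNReal.ofReal_ne_top]
    refine lintegral_mono_ae ?_
    rw [ae_restrict_iff' measurableSet_Ioi]
    refine ae_of_all _ fun t ht => ?_
    rw [mem_Ioi] at ht
    set A := {x | t < h x ^ 2} with hAdef
    have hA : MeasurableSet A := measurableSet_lt measurable_const (hh.pow_const 2)
    have himg : ∀ k, (θ k) '' A = {x | t < h ((θ k).symm x) ^ 2} := by
      intro k
      rw [MeasurableEquiv.image_eq_preimage_symm]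
      rfl
    have hsub : A ⊆ {x | 0 < h x} := by
      intro x hx
      simp only [hAdef, mem_setOf_eq] at hx ⊢
      have h2 : 0 < h x ^ 2 := lt_trans ht hx
      rcases lt_or_eq_of_le (hh0 x) with h3 | h3
      · exact h3
      · exfalso; rw [← h3] at h2; simp at h2
    have hA12 : (μ A).toReal ≤ 1/2 := by
      have hle : μ A ≤ 1/2 := le_trans (measure_mono hsub) hsmall
      calc (μ A).toReal ≤ ((1:ENNReal)/2).toReal := ENNReal.toReal_mono (by norm_num) hle
        _ = 1/2 := by norm_num
    have hset := hsets A hA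
    have hsum_nonneg : 0 ≤ ∑ k, (μ (symmDiff A ((θ k) '' A))).toReal :=
      Finset.sum_nonneg fun k _ => ENNReal.toReal_nonneg
    have hmain : (μ A).toReal ≤ 2 * κ * ∑ k, (μ (symmDiff A ((θ k) '' A))).toReal := by
      nlinarith [ENNReal.toReal_nonneg (a := μ A)]
    calc μ A = ENNReal.ofReal ((μ A).toReal) := (ENNReal.ofReal_toReal (measure_ne_top μ A)).symm
      _ ≤ ENNReal.ofReal (2 * κ * ∑ k, (μ (symmDiff A ((θ k) '' A))).toReal) :=
          ENNReal.ofReal_le_ofReal hmain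
      _ = ENNReal.ofReal (2 * κ) * ENNReal.ofReal (∑ k, (μ (symmDiff A ((θ k) '' A))).toReal) :=
          ENNReal.ofReal_mul (by positivity)
      _ = ENNReal.ofReal (2 * κ) * ∑ k, μ (symmDiff A ((θ k) '' A)) := by
          rw [ENNReal.ofReal_sum_of_nonneg (fun k _ => ENNReal.toReal_nonneg)]
          congr 1
          exact Finset.sum_congr rfl fun k _ => ENNReal.ofReal_toReal (measure_ne_top _ _)
      _ = ENNReal.ofReal (2 * κ) * ∑ k, μ (symmDiff A {x | t < h ((θ k).symm x) ^ 2}) := by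
          congr 1
          exact Finset.sum_congr rfl fun k _ => by rw [himg k]
  have step2 : ∀ k, ∫⁻ t in Ioi (0:ℝ),
      μ (symmDiff {x | t < h x ^ 2} {x | t < h ((θ k).symm x) ^ 2})
      = ∫⁻ x, ENNReal.ofReal |h x ^ 2 - h ((θ k).symm x) ^ 2| ∂μ :=
    fun k => layercake_symmDiff μ (fun x => h x ^ 2) (fun x => h ((θ k).symm x) ^ 2)
      (hh.pow_const 2) ((hθmeas k).pow_const 2) (fun x => sq_nonneg _) (fun x => sq_nonneg _)
  have conj22 : Real.HolderConjugate 2 2 := Real.HolderConjugate.two_two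
  have step3 : ∀ k, ∫⁻ x, ENNReal.ofReal |h x ^ 2 - h ((θ k).symm x) ^ 2| ∂μ
      ≤ (D k) ^ (1/2 : ℝ) * (2 * ((c k)⁻¹ + 1) * E) ^ (1/2 : ℝ) := by
    intro k
    set u : X → ENNReal := fun x => ENNReal.ofReal |h ((θ k).symm x) - h x| with hudef
    set v : X → ENNReal := fun x => ENNReal.ofReal (h ((θ k).symm x) + h x) with hvdef
    have hfact : ∀ x, ENNReal.ofReal |h x ^ 2 - h ((θ k).symm x) ^ 2| = (u * v) x := by
      intro x
      simp only [hudef, hvdef, Pi.mul_apply]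
      rw [← ENNReal.ofReal_mul (abs_nonneg _)]
      congr 1
      have habs : |h x ^ 2 - h ((θ k).symm x) ^ 2|
          = |(h ((θ k).symm x) - h x) * (h ((θ k).symm x) + h x)| := by
        rw [show (h ((θ k).symm x) - h x) * (h ((θ k).symm x) + h x)
          = h ((θ k).symm x) ^ 2 - h x ^ 2 from by ring, abs_sub_comm]
      rw [habs, abs_mul, abs_of_nonneg (add_nonneg (hh0 _) (hh0 _))]
    have humeas : AEMeasurable u μ := (((hθmeas k).sub hh).abs.ennreal_ofReal).aemeasurable
    have hvmeas : AEMeasurable v μ := (((hθmeas k).add hh).ennreal_ofReal).aemeasurable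
    have hholder := ENNReal.lintegral_mul_le_Lp_mul_Lq μ conj22 humeas hvmeas
    have hu2 : ∫⁻ x, u x ^ (2:ℝ) ∂μ = D k := by
      refine lintegral_congr fun x => ?_
      simp only [hudef, hDdef]
      rw [ENNReal.ofReal_rpow_of_nonneg (abs_nonneg _) (by norm_num)]
      congr 1
      rw [show ((2:ℝ)) = ((2:ℕ):ℝ) from by norm_num, Real.rpow_natCast, sq_abs]
    have hv2 : ∫⁻ x, v x ^ (2:ℝ) ∂μ ≤ 2 * ((c k)⁻¹ + 1) * E := by
      have heq : ∫⁻ x, v x ^ (2:ℝ) ∂μ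
          = ∫⁻ x, ENNReal.ofReal ((h ((θ k).symm x) + h x) ^ 2) ∂μ := by
        refine lintegral_congr fun x => ?_
        simp only [hvdef]
        rw [ENNReal.ofReal_rpow_of_nonneg (add_nonneg (hh0 _) (hh0 _)) (by norm_num)]
        congr 1
        rw [show ((2:ℝ)) = ((2:ℕ):ℝ) from by norm_num, Real.rpow_natCast]
      rw [heq]
      exact hVbound k
    calc ∫⁻ x, ENNReal.ofReal |h x ^ 2 - h ((θ k).symm x) ^ 2| ∂μ
        = ∫⁻ x, (u * v) x ∂μ := lintegral_congr hfact
      _ ≤ (∫⁻ x, u x ^ (2:ℝ) ∂μ) ^ (1/(2:ℝ)) * (∫⁻ x, v x ^ (2:ℝ) ∂μ) ^ (1/(2:ℝ)) := hholder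
      _ ≤ (D k) ^ (1/2 : ℝ) * (2 * ((c k)⁻¹ + 1) * E) ^ (1/2 : ℝ) := by
          rw [hu2]
          exact mul_le_mul_right (ENNReal.rpow_le_rpow hv2 (by norm_num)) _
  have final : E ≤ ENNReal.ofReal (2 * κ)
      * ∑ k, (D k) ^ (1/2 : ℝ) * (2 * ((c k)⁻¹ + 1) * E) ^ (1/2 : ℝ) := by
    refine step1.trans ?_
    gcongr with k hk
    rw [step2 k]
    exact step3 k
  -- pass to real numbers
  set e := E.toReal with hedef
  set d : Fin n → ℝ := fun k => (D k).toReal with hddef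
  have hterm_ne : ∀ k : Fin n, (D k) ^ (1/2:ℝ) * (2 * ((c k)⁻¹ + 1) * E) ^ (1/2:ℝ) ≠ ⊤ := by
    intro k
    exact ENNReal.mul_ne_top (ENNReal.rpow_ne_top_of_nonneg (by norm_num) (hD_ne k))
      (ENNReal.rpow_ne_top_of_nonneg (by norm_num) (hcE_ne k))
  have hrhs_ne : ENNReal.ofReal (2 * κ)
      * ∑ k, (D k) ^ (1/2:ℝ) * (2 * ((c k)⁻¹ + 1) * E) ^ (1/2:ℝ) ≠ ⊤ := by
    refine ENNReal.mul_ne_top ENNReal.ofReal_ne_top ?_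
    rw [← lt_top_iff_ne_top]
    exact ENNReal.sum_lt_top.mpr fun k _ => lt_top_iff_ne_top.mpr (hterm_ne k)
  have treal := ENNReal.toReal_mono hrhs_ne final
  have hcalc : (ENNReal.ofReal (2 * κ)
        * ∑ k, (D k) ^ (1/2:ℝ) * (2 * ((c k)⁻¹ + 1) * E) ^ (1/2:ℝ)).toReal
      = 2 * κ * ∑ k, Real.sqrt (d k)
          * (Real.sqrt (2 * (((c k)⁻¹).toReal + 1)) * Real.sqrt e) := by
    rw [ENNReal.toReal_mul, ENNReal.toReal_ofReal (by positivity),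
      ENNReal.toReal_sum (fun k _ => hterm_ne k)]
    congr 1
    refine Finset.sum_congr rfl fun k _ => ?_
    rw [ENNReal.toReal_mul, ← ENNReal.toReal_rpow, ← ENNReal.toReal_rpow,
      ← Real.sqrt_eq_rpow, ← Real.sqrt_eq_rpow]
    congr 1
    rw [ENNReal.toReal_mul, ENNReal.toReal_mul,
      ENNReal.toReal_add (ENNReal.inv_ne_top.mpr (hc0 k)) ENNReal.one_ne_top,
      ENNReal.toReal_one, ENNReal.toReal_ofNat,
      Real.sqrt_mul (by positivity) e]
  rw [hcalc] at treal
  -- rewrite goal integrals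
  have hgoalL : ∫ x, h x ^ 2 ∂μ = e := by
    rw [integral_eq_lintegral_of_nonneg_ae (ae_of_all _ fun x => sq_nonneg _)
      (hh.pow_const 2).aestronglyMeasurable]
  have hgoalD : ∀ k : Fin n, ∫ x, (h ((θ k).symm x) - h x) ^ 2 ∂μ = d k := by
    intro k
    rw [integral_eq_lintegral_of_nonneg_ae (f := fun x => (h ((θ k).symm x) - h x) ^ 2) (ae_of_all _ fun x => sq_nonneg _)
      (((hθmeas k).sub hh).pow_const 2).aestronglyMeasurable]
  rw [hgoalL]
  have hgoalsum : ∑ k, Real.sqrt (2 * (((c k)⁻¹).toReal + 1))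
        * Real.sqrt (∫ x, (h ((θ k).symm x) - h x) ^ 2 ∂μ)
      = ∑ k, Real.sqrt (2 * (((c k)⁻¹).toReal + 1)) * Real.sqrt (d k) :=
    Finset.sum_congr rfl fun k _ => by rw [hgoalD k]
  rw [hgoalsum]
  -- conclude
  have key : e ≤ (2 * κ * ∑ k, Real.sqrt (2 * (((c k)⁻¹).toReal + 1)) * Real.sqrt (d k))
      * Real.sqrt e := by
    have hsum : ∑ k, Real.sqrt (d k)
          * (Real.sqrt (2 * (((c k)⁻¹).toReal + 1)) * Real.sqrt e)
        = (∑ k, Real.sqrt (2 * (((c k)⁻¹).toReal + 1)) * Real.sqrt (d k)) * Real.sqrt e := by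
      rw [Finset.sum_mul]
      exact Finset.sum_congr rfl fun k _ => by ring
    rw [hsum] at treal
    linarith [treal]
  have hRHS_nonneg : 0 ≤ 2 * κ * ∑ k, Real.sqrt (2 * (((c k)⁻¹).toReal + 1)) * Real.sqrt (d k) := by
    refine mul_nonneg (by linarith) (Finset.sum_nonneg fun k _ => ?_)
    exact mul_nonneg (Real.sqrt_nonneg _) (Real.sqrt_nonneg _)
  by_cases he : e = 0
  · rw [he, Real.sqrt_zero]
    exact hRHS_nonneg
  · have he' : 0 < e := lt_of_le_of_ne ENNReal.toReal_nonneg (Ne.symm he)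
    have hse : 0 < Real.sqrt e := Real.sqrt_pos.mpr he'
    have h5 : Real.sqrt e * Real.sqrt e
        ≤ (2 * κ * ∑ k, Real.sqrt (2 * (((c k)⁻¹).toReal + 1)) * Real.sqrt (d k))
          * Real.sqrt e := by
      rw [Real.mul_self_sqrt ENNReal.toReal_nonneg]
      exact key
    exact le_of_mul_le_mul_right h5 hse

private lemma sqrt_add_le (a b : ℝ) (ha : 0 ≤ a) (hb : 0 ≤ b) :
    Real.sqrt (a + b) ≤ Real.sqrt a + Real.sqrt b := by
  have h1 : a + b ≤ (Real.sqrt a + Real.sqrt b) ^ 2 := by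
    nlinarith [Real.sq_sqrt ha, Real.sq_sqrt hb, Real.sqrt_nonneg a, Real.sqrt_nonneg b,
      Real.sqrt_mul_self ha, Real.sqrt_mul_self hb]
  calc Real.sqrt (a + b) ≤ Real.sqrt ((Real.sqrt a + Real.sqrt b) ^ 2) := Real.sqrt_le_sqrt h1
    _ = Real.sqrt a + Real.sqrt b := Real.sqrt_sq (by positivity)

/-- If a spectral-gap inequality holds for indicator functions of measurable sets, then a
spectral-gap inequality (with a possibly different constant) holds for all of `L²(X, μ)`. -/
theorem stmt4 {X : Type*} [MeasurableSpace X] (μ : Measure X) [IsProbabilityMeasure μ]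
    (n : ℕ) (θ : Fin n → X ≃ᵐ X) (hbdd : ∀ k, MuBounded μ (θ k))
    (κ : ℝ) (hκ : 0 < κ)
    (hsets : ∀ A : Set X, MeasurableSet A →
      (μ A).toReal * (1 - (μ A).toReal) ≤ κ * ∑ k, (μ (symmDiff A ((θ k) '' A))).toReal) :
    ∃ κ' : ℝ, 0 < κ' ∧ ∀ f : X → ℝ, MemLp f 2 μ →
      Real.sqrt (∫ x, (f x - ∫ y, f y ∂μ) ^ 2 ∂μ)
        ≤ κ' * ∑ k, Real.sqrt (∫ x, (f ((θ k).symm x) - f x) ^ 2 ∂μ) := by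
  classical
  have hbdd' : ∀ k, ∃ c : ENNReal, 0 < c ∧ c • μ ≤ μ.map (θ k) := by
    intro k
    obtain ⟨c, C, hc, _, hle, _⟩ := hbdd k
    exact ⟨c, hc, hle⟩
  choose c hc0 hcle using hbdd'
  set ρ : Fin n → ℝ := fun k => Real.sqrt (2 * (((c k)⁻¹).toReal + 1)) with hρdef
  have hρ_nonneg : ∀ k, 0 ≤ ρ k := fun k => Real.sqrt_nonneg _
  set K : ℝ := 1 + ∑ k, ρ k with hKdef
  have hKpos : 0 < K := by
    have : 0 ≤ ∑ k, ρ k := Finset.sum_nonneg fun k _ => hρ_nonneg k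
    rw [hKdef]; linarith
  have hρ_le : ∀ k : Fin n, ρ k ≤ K := by
    intro k
    have := Finset.single_le_sum (f := ρ) (fun j _ => hρ_nonneg j) (Finset.mem_univ k)
    rw [hKdef]; linarith
  refine ⟨4 * κ * K, by positivity, ?_⟩
  intro f hf
  obtain ⟨f', hf'sm, hff'⟩ := hf.1
  have hf'meas : Measurable f' := hf'sm.measurable
  have hf' : MemLp f' 2 μ := hf.ae_eq hff'
  obtain ⟨m, hm1, hm2⟩ := exists_median μ f' hf'meas
  set g : X → ℝ := fun x => f' x - m with hgdef
  have hgmeas : Measurable g := hf'meas.sub measurable_const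
  have hg2 : MemLp g 2 μ := hf'.sub (memLp_const m)
  set gp : X → ℝ := fun x => max (g x) 0 with hgpdef
  set gm : X → ℝ := fun x => max (-g x) 0 with hgmdef
  have hgpmeas : Measurable gp := hgmeas.max measurable_const
  have hgmmeas : Measurable gm := hgmeas.neg.max measurable_const
  have habs_le : ∀ x, ‖gp x‖ ≤ ‖g x‖ := by
    intro x
    simp only [hgpdef, Real.norm_eq_abs]
    rcases le_total (g x) 0 with h | h
    · rw [max_eq_right h]; simp [abs_nonneg]
    · rw [max_eq_left h]
  have habs_le' : ∀ x, ‖gm x‖ ≤ ‖g x‖ := by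
    intro x
    simp only [hgmdef, Real.norm_eq_abs]
    rcases le_total (g x) 0 with h | h
    · rw [max_eq_left (by linarith)]; rw [abs_neg]
    · rw [max_eq_right (by linarith)]; simp [abs_nonneg]
  have hgp2 : MemLp gp 2 μ :=
    hg2.of_le hgpmeas.aestronglyMeasurable (ae_of_all _ habs_le)
  have hgm2 : MemLp gm 2 μ :=
    hg2.of_le hgmmeas.aestronglyMeasurable (ae_of_all _ habs_le')
  have hgp0 : ∀ x, 0 ≤ gp x := fun x => le_max_right _ _
  have hgm0 : ∀ x, 0 ≤ gm x := fun x => le_max_right _ _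
  have hgpsmall : μ {x | 0 < gp x} ≤ 1/2 := by
    have : {x | 0 < gp x} = {x | m < f' x} := by
      ext x
      simp only [hgpdef, mem_setOf_eq, lt_max_iff, lt_irrefl, or_false, hgdef, sub_pos]
    rw [this]; exact hm1
  have hgmsmall : μ {x | 0 < gm x} ≤ 1/2 := by
    have : {x | 0 < gm x} = {x | f' x < m} := by
      ext x
      simp only [hgmdef, mem_setOf_eq, lt_max_iff, lt_irrefl, or_false, hgdef, neg_pos,
        sub_neg]
    rw [this]; exact hm2
  -- core applications
  have Hp := core_cheeger μ θ c (fun k => (hc0 k).ne') hcle κ hκ hsets gp hgpmeas hgp0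
    hgp2 hgpsmall
  have Hm := core_cheeger μ θ c (fun k => (hc0 k).ne') hcle κ hκ hsets gm hgmmeas hgm0
    hgm2 hgmsmall
  -- f' ∘ θ.symm is in L²
  have hgθ2 : ∀ k : Fin n, MemLp (fun x => g ((θ k).symm x)) 2 μ := by
    intro k
    have h1 : MemLp g 2 (μ.map (θ k).symm) := by
      refine MemLp.mono_measure (map_symm_le μ (θ k) (c k) (hc0 k).ne' (hcle k)) ?_
      exact hg2.smul_measure (ENNReal.inv_ne_top.mpr (hc0 k).ne')
    exact (memLp_map_measure_iff hgmeas.aestronglyMeasurable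
      (θ k).symm.measurable.aemeasurable).mp h1
  have hDint : ∀ k : Fin n, Integrable (fun x => (g ((θ k).symm x) - g x) ^ 2) μ :=
    fun k => ((hgθ2 k).sub hg2).integrable_sq
  -- domination of difference terms
  have hdominate : ∀ (k : Fin n) (u : X → ℝ), Measurable u →
      (∀ x, |u ((θ k).symm x) - u x| ≤ |g ((θ k).symm x) - g x|) →
      ∫ x, (u ((θ k).symm x) - u x) ^ 2 ∂μ ≤ ∫ x, (g ((θ k).symm x) - g x) ^ 2 ∂μ := by
    intro k u hu hle
    refine integral_mono_of_nonneg (ae_of_all _ fun x => sq_nonneg _) (hDint k)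
      (ae_of_all _ fun x => ?_)
    have h1 := hle x
    calc (u ((θ k).symm x) - u x) ^ 2 = |u ((θ k).symm x) - u x| ^ 2 := (sq_abs _).symm
      _ ≤ |g ((θ k).symm x) - g x| ^ 2 := by gcongr <;> exact abs_nonneg _
      _ = (g ((θ k).symm x) - g x) ^ 2 := sq_abs _
  have hgp_dom : ∀ k x, |gp ((θ k).symm x) - gp x| ≤ |g ((θ k).symm x) - g x| :=
    fun k x => abs_max_sub_max_le_abs _ _ _
  have hgm_dom : ∀ k x, |gm ((θ k).symm x) - gm x| ≤ |g ((θ k).symm x) - g x| := by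
    intro k x
    have := abs_max_sub_max_le_abs (-g ((θ k).symm x)) (-g x) 0
    calc |gm ((θ k).symm x) - gm x| ≤ |-g ((θ k).symm x) - -g x| := this
      _ = |g ((θ k).symm x) - g x| := by rw [← abs_neg]; ring_nf
  -- difference of g equals difference of f'
  have hgdiff : ∀ (k : Fin n) x, g ((θ k).symm x) - g x = f' ((θ k).symm x) - f' x := by
    intro k x
    simp only [hgdef]
    ring
  -- integrals wrt f vs f'
  have hdiff_eq : ∀ k : Fin n, ∫ x, (g ((θ k).symm x) - g x) ^ 2 ∂μ
      = ∫ x, (f ((θ k).symm x) - f x) ^ 2 ∂μ := by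
    intro k
    have hcomp : (fun x => f' ((θ k).symm x)) =ᵐ[μ] (fun x => f ((θ k).symm x)) :=
      ae_comp_symm μ (θ k) (c k) (hc0 k).ne' (hcle k) hff'.symm
    refine integral_congr_ae ?_
    filter_upwards [hcomp, hff'.symm] with x h1 h2
    rw [hgdiff k x, h1, h2]
  -- variance minimization
  have hf'int : Integrable f' μ := hf'.integrable one_le_two
  have hgint : Integrable g μ := hg2.integrable one_le_two
  have hg2int : Integrable (fun x => g x ^ 2) μ := hg2.integrable_sq
  set a : ℝ := ∫ x, g x ∂μ with hadef
  have hEf' : ∫ y, f' y ∂μ = a + m := by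
    have h1 : a = ∫ y, f' y ∂μ - m := by
      rw [hadef]
      simp only [hgdef]
      rw [integral_sub hf'int (integrable_const m), integral_const]
      simp [measure_univ]
    linarith
  have hvar : ∫ x, (f' x - ∫ y, f' y ∂μ) ^ 2 ∂μ ≤ ∫ x, g x ^ 2 ∂μ := by
    have hfmg : ∀ x, f' x - ∫ y, f' y ∂μ = g x - a := by
      intro x
      rw [hEf']
      simp only [hgdef]
      ring
    calc ∫ x, (f' x - ∫ y, f' y ∂μ) ^ 2 ∂μ = ∫ x, (g x - a) ^ 2 ∂μ := by
          congr 1; funext x; rw [hfmg]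
      _ = ∫ x, (g x ^ 2 - 2 * a * g x + a ^ 2) ∂μ := by
          congr 1; funext x; ring
      _ = (∫ x, g x ^ 2 ∂μ - 2 * a * ∫ x, g x ∂μ) + a ^ 2 := by
          have h1int : Integrable (fun x => g x ^ 2 - 2 * a * g x) μ :=
            hg2int.sub (hgint.const_mul (2 * a))
          have e1 : ∫ x, (g x ^ 2 - 2 * a * g x + a ^ 2) ∂μ
              = (∫ x, (g x ^ 2 - 2 * a * g x) ∂μ) + ∫ _x, a ^ 2 ∂μ :=
            integral_add h1int (integrable_const _)
          have e2 : ∫ x, (g x ^ 2 - 2 * a * g x) ∂μ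
              = (∫ x, g x ^ 2 ∂μ) - ∫ x, 2 * a * g x ∂μ :=
            integral_sub hg2int (hgint.const_mul (2 * a))
          have e3 : ∫ x, 2 * a * g x ∂μ = 2 * a * ∫ x, g x ∂μ := integral_const_mul _ _
          have e4 : ∫ _x : X, a ^ 2 ∂μ = a ^ 2 := by simp
          rw [e1, e2, e3, e4]
      _ = ∫ x, g x ^ 2 ∂μ - a ^ 2 := by rw [← hadef]; ring
      _ ≤ ∫ x, g x ^ 2 ∂μ := by nlinarith [sq_nonneg a]
  have hLHS : ∫ x, (f x - ∫ y, f y ∂μ) ^ 2 ∂μ = ∫ x, (f' x - ∫ y, f' y ∂μ) ^ 2 ∂μ := by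
    have hEf : ∫ y, f y ∂μ = ∫ y, f' y ∂μ := integral_congr_ae hff'
    refine integral_congr_ae ?_
    filter_upwards [hff'] with x hx
    rw [hx, hEf]
  have hsplit : ∫ x, g x ^ 2 ∂μ = ∫ x, gp x ^ 2 ∂μ + ∫ x, gm x ^ 2 ∂μ := by
    rw [← integral_add hgp2.integrable_sq hgm2.integrable_sq]
    refine integral_congr_ae (ae_of_all _ fun x => ?_)
    rcases le_total (g x) 0 with h | h
    · simp only [hgpdef, hgmdef, max_eq_right h, max_eq_left (neg_nonneg.mpr h)]
      ring
    · simp only [hgpdef, hgmdef, max_eq_left h, max_eq_right (neg_nonpos.mpr h)]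
      ring
  have hIp : 0 ≤ ∫ x, gp x ^ 2 ∂μ := integral_nonneg fun x => sq_nonneg _
  have hIm : 0 ≤ ∫ x, gm x ^ 2 ∂μ := integral_nonneg fun x => sq_nonneg _
  have hsum : ∀ u : X → ℝ, Measurable u →
      (∀ k x, |u ((θ k).symm x) - u x| ≤ |g ((θ k).symm x) - g x|) →
      ∑ k, Real.sqrt (2 * (((c k)⁻¹).toReal + 1))
          * Real.sqrt (∫ x, (u ((θ k).symm x) - u x) ^ 2 ∂μ)
      ≤ K * ∑ k, Real.sqrt (∫ x, (f ((θ k).symm x) - f x) ^ 2 ∂μ) := by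
    intro u hu hdom
    rw [Finset.mul_sum]
    refine Finset.sum_le_sum fun k _ => ?_
    have h1 : ∫ x, (u ((θ k).symm x) - u x) ^ 2 ∂μ
        ≤ ∫ x, (f ((θ k).symm x) - f x) ^ 2 ∂μ := by
      rw [← hdiff_eq k]
      exact hdominate k u hu (fun x => hdom k x)
    exact mul_le_mul (hρ_le k) (Real.sqrt_le_sqrt h1) (Real.sqrt_nonneg _) hKpos.le
  have hκ2 : (0:ℝ) ≤ 2 * κ := by linarith
  rw [hLHS]
  calc Real.sqrt (∫ x, (f' x - ∫ y, f' y ∂μ) ^ 2 ∂μ)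
      ≤ Real.sqrt (∫ x, g x ^ 2 ∂μ) := Real.sqrt_le_sqrt hvar
    _ ≤ Real.sqrt (∫ x, gp x ^ 2 ∂μ) + Real.sqrt (∫ x, gm x ^ 2 ∂μ) := by
        rw [hsplit]
        exact sqrt_add_le _ _ hIp hIm
    _ ≤ (2 * κ * ∑ k, Real.sqrt (2 * (((c k)⁻¹).toReal + 1))
            * Real.sqrt (∫ x, (gp ((θ k).symm x) - gp x) ^ 2 ∂μ))
        + (2 * κ * ∑ k, Real.sqrt (2 * (((c k)⁻¹).toReal + 1))
            * Real.sqrt (∫ x, (gm ((θ k).symm x) - gm x) ^ 2 ∂μ)) := add_le_add Hp Hm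
    _ ≤ 2 * κ * (K * ∑ k, Real.sqrt (∫ x, (f ((θ k).symm x) - f x) ^ 2 ∂μ))
        + 2 * κ * (K * ∑ k, Real.sqrt (∫ x, (f ((θ k).symm x) - f x) ^ 2 ∂μ)) := by
        refine add_le_add (mul_le_mul_of_nonneg_left ?_ hκ2)
          (mul_le_mul_of_nonneg_left ?_ hκ2)
        · exact hsum gp hgpmeas hgp_dom
        · exact hsum gm hgmmeas hgm_dom
    _ = 4 * κ * K * ∑ k, Real.sqrt (∫ x, (f ((θ k).symm x) - f x) ^ 2 ∂μ) := by ring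

end Aux
end

section
/- Let (X,μ) be a probability space and θ₁,…,θₙ μ-bounded automorphisms. Suppose κ > 0 satisfies: for every nonnegative g ∈ L²(X,μ), ‖g − μ(g)‖₂² ≤ κ·Σₖ ‖g − θₖ(g)‖₂·‖g‖₂. Then for every real-valued f ∈ L²(X,μ) with μ(f) = 0, ‖f‖₂ ≤ 4κ·Σₖ ‖f − θₖ(f)‖₂. -/
open MeasureTheory

lemma comp_memLp {X : Type*} [MeasurableSpace X] {μ : Measure X} [IsProbabilityMeasure μ]
    {θ : X ≃ᵐ X} (h : MuBounded μ θ)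
    {f : X → ℝ} (hf : MemLp f 2 μ) : MemLp (fun x => f (θ.symm x)) 2 μ := by
  obtain ⟨c, C, hc, hC, h1, h2⟩ := h
  have hcC : c ≤ C := by
    have h3 := (h1.trans h2) Set.univ
    simpa [Measure.smul_apply] using h3
  have hcT : c ≠ ⊤ := fun hT => hC (top_le_iff.mp (hT ▸ hcC))
  have key : c • μ.map θ.symm ≤ μ := by
    have hmono := Measure.map_mono (f := θ.symm) h1 θ.symm.measurable
    rwa [Measure.map_smul, Measure.map_map θ.symm.measurable θ.measurable,
      MeasurableEquiv.symm_comp_self, Measure.map_id] at hmono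
  have hle : μ.map θ.symm ≤ c⁻¹ • μ := by
    intro s
    have h4 := key s
    simp only [Measure.smul_apply, smul_eq_mul] at h4 ⊢
    rw [← one_mul ((Measure.map (⇑θ.symm) μ) s), ← ENNReal.inv_mul_cancel hc.ne' hcT,
      mul_assoc]
    exact mul_le_mul_right h4 _
  have hac : μ.map θ.symm ≪ μ :=
    (Measure.absolutelyContinuous_of_le hle).trans (Measure.absolutelyContinuous_of_le_smul le_rfl)
  have haesm : AEStronglyMeasurable f (μ.map θ.symm) := hf.1.mono_ac hac
  refine ⟨haesm.comp_measurable θ.symm.measurable, ?_⟩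
  have heq : eLpNorm (fun x => f (θ.symm x)) 2 μ = eLpNorm f 2 (μ.map θ.symm) :=
    (eLpNorm_map_measure haesm θ.symm.measurable.aemeasurable).symm
  rw [heq]
  calc eLpNorm f 2 (μ.map θ.symm) ≤ eLpNorm f 2 (c⁻¹ • μ) := eLpNorm_mono_measure f hle
    _ = c⁻¹ ^ (1/(2:ENNReal)).toReal • eLpNorm f 2 μ :=
        eLpNorm_smul_measure_of_ne_top (by norm_num) f c⁻¹
    _ < ⊤ := by
        rw [smul_eq_mul]
        exact ENNReal.mul_lt_top
          (ENNReal.rpow_lt_top_of_nonneg (by positivity) (ENNReal.inv_ne_top.mpr hc.ne')) hf.2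

/-- If for every nonnegative `g ∈ L²` one has
`‖g - μ(g)‖₂² ≤ κ · Σₖ ‖g - θₖ(g)‖₂ · ‖g‖₂`, then for every real-valued `f ∈ L²` with
`μ(f) = 0` one has `‖f‖₂ ≤ 4κ · Σₖ ‖f - θₖ(f)‖₂`, where `θ(g) = g ∘ θ⁻¹`. -/
theorem stmt6 {X : Type*} [MeasurableSpace X] (μ : Measure X) [IsProbabilityMeasure μ]
    (n : ℕ) (θ : Fin n → X ≃ᵐ X) (hbdd : ∀ k, MuBounded μ (θ k))
    (κ : ℝ) (hκ : 0 < κ)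
    (hyp : ∀ g : X → ℝ, MemLp g 2 μ → (∀ x, 0 ≤ g x) →
      ∫ x, (g x - ∫ y, g y ∂μ) ^ 2 ∂μ
        ≤ κ * ∑ k, Real.sqrt (∫ x, (g x - g ((θ k).symm x)) ^ 2 ∂μ)
            * Real.sqrt (∫ x, (g x) ^ 2 ∂μ)) :
    ∀ f : X → ℝ, MemLp f 2 μ → (∫ x, f x ∂μ) = 0 →
      Real.sqrt (∫ x, (f x) ^ 2 ∂μ)
        ≤ 4 * κ * ∑ k, Real.sqrt (∫ x, (f x - f ((θ k).symm x)) ^ 2 ∂μ) := by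
  intro f hf hmean
  set p : X → ℝ := fun x => max (f x) 0 with hpdef
  set q : X → ℝ := fun x => max (-f x) 0 with hqdef
  have hp : MemLp p 2 μ := hf.pos_part
  have hq : MemLp q 2 μ := hf.neg_part
  have hpq : ∀ x, f x = p x - q x := fun x =>
    (max_zero_sub_max_neg_zero_eq_self (f x)).symm
  have hp0 : ∀ x, 0 ≤ p x := fun x => le_max_right _ _
  have hq0 : ∀ x, 0 ≤ q x := fun x => le_max_right _ _
  set S : ℝ := ∑ k, Real.sqrt (∫ x, (f x - f ((θ k).symm x)) ^ 2 ∂μ) with hSdef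
  set Sf : ℝ := Real.sqrt (∫ x, (f x) ^ 2 ∂μ) with hSfdef
  have hS0 : 0 ≤ S := Finset.sum_nonneg fun k _ => Real.sqrt_nonneg _
  have hSf0 : 0 ≤ Sf := Real.sqrt_nonneg _
  -- the mean values of p and q coincide
  have hab : ∫ x, p x ∂μ = ∫ x, q x ∂μ := by
    have : ∫ x, f x ∂μ = ∫ x, p x ∂μ - ∫ x, q x ∂μ := by
      rw [← integral_sub (hp.integrable one_le_two) (hq.integrable one_le_two)]
      exact integral_congr_ae (Filter.Eventually.of_forall fun x => hpq x)
    linarith [hmean ▸ this]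
  -- the key estimate for nonnegative functions dominated by f
  have main : ∀ g : X → ℝ, MemLp g 2 μ → (∀ x, 0 ≤ g x) →
      (∀ x y, (g x - g y) ^ 2 ≤ (f x - f y) ^ 2) → (∀ x, (g x) ^ 2 ≤ (f x) ^ 2) →
      ∫ x, (g x - ∫ y, g y ∂μ) ^ 2 ∂μ ≤ κ * (S * Sf) := by
    intro g hg hg0 hdom hdom2
    refine (hyp g hg hg0).trans ?_
    rw [hSdef, Finset.sum_mul]
    refine mul_le_mul_of_nonneg_left (Finset.sum_le_sum fun k _ => ?_) hκ.le
    have h1 : Real.sqrt (∫ x, (g x - g ((θ k).symm x)) ^ 2 ∂μ)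
        ≤ Real.sqrt (∫ x, (f x - f ((θ k).symm x)) ^ 2 ∂μ) := by
      apply Real.sqrt_le_sqrt
      exact integral_mono_of_nonneg (Filter.Eventually.of_forall fun x => sq_nonneg _)
        ((hf.sub (comp_memLp (hbdd k) hf)).integrable_sq)
        (Filter.Eventually.of_forall fun x => hdom x ((θ k).symm x))
    have h2 : Real.sqrt (∫ x, (g x) ^ 2 ∂μ) ≤ Sf := by
      apply Real.sqrt_le_sqrt
      exact integral_mono_of_nonneg (Filter.Eventually.of_forall fun x => sq_nonneg _)
        hf.integrable_sq (Filter.Eventually.of_forall fun x => hdom2 x)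
    exact mul_le_mul h1 h2 (Real.sqrt_nonneg _) (Real.sqrt_nonneg _)
  -- pointwise domination facts for p
  have hdomp : ∀ x y, (p x - p y) ^ 2 ≤ (f x - f y) ^ 2 := by
    intro x y
    have h := abs_max_sub_max_le_abs (f x) (f y) 0
    calc (p x - p y) ^ 2 = |max (f x) 0 - max (f y) 0| ^ 2 := (sq_abs _).symm
      _ ≤ |f x - f y| ^ 2 := pow_le_pow_left₀ (abs_nonneg _) h 2
      _ = (f x - f y) ^ 2 := sq_abs _
  have hdomp2 : ∀ x, (p x) ^ 2 ≤ (f x) ^ 2 := by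
    intro x
    rcases le_total (f x) 0 with h | h
    · have hx : p x = 0 := max_eq_right h
      rw [hx]
      simpa using sq_nonneg (f x)
    · have hx : p x = f x := max_eq_left h
      rw [hx]
  have hdomq : ∀ x y, (q x - q y) ^ 2 ≤ (f x - f y) ^ 2 := by
    intro x y
    have h := abs_max_sub_max_le_abs (-f x) (-f y) 0
    rw [neg_sub_neg, abs_sub_comm (f y) (f x)] at h
    calc (q x - q y) ^ 2 = |max (-f x) 0 - max (-f y) 0| ^ 2 := (sq_abs _).symm
      _ ≤ |f x - f y| ^ 2 := pow_le_pow_left₀ (abs_nonneg _) h 2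
      _ = (f x - f y) ^ 2 := sq_abs _
  have hdomq2 : ∀ x, (q x) ^ 2 ≤ (f x) ^ 2 := by
    intro x
    rcases le_total (-f x) 0 with h | h
    · have hx : q x = 0 := max_eq_right h
      rw [hx]
      simpa using sq_nonneg (f x)
    · have hx : q x = -f x := max_eq_left h
      rw [hx, neg_sq]
  have hP := main p hp hp0 hdomp hdomp2
  have hQ := main q hq hq0 hdomq hdomq2
  -- f² is dominated by 2(p-a)² + 2(q-b)²
  set a : ℝ := ∫ y, p y ∂μ with hadef
  set b : ℝ := ∫ y, q y ∂μ with hbdef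
  have hpa : MemLp (fun x => p x - a) 2 μ := hp.sub (memLp_const a)
  have hqb : MemLp (fun x => q x - b) 2 μ := hq.sub (memLp_const b)
  have hsplit : ∫ x, (f x) ^ 2 ∂μ
      ≤ 2 * ∫ x, (p x - a) ^ 2 ∂μ + 2 * ∫ x, (q x - b) ^ 2 ∂μ := by
    have hint : Integrable (fun x => 2 * (p x - a) ^ 2 + 2 * (q x - b) ^ 2) μ :=
      (hpa.integrable_sq.const_mul 2).add (hqb.integrable_sq.const_mul 2)
    have hmono : ∫ x, (f x) ^ 2 ∂μ
        ≤ ∫ x, (2 * (p x - a) ^ 2 + 2 * (q x - b) ^ 2) ∂μ := by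
      apply integral_mono_of_nonneg (Filter.Eventually.of_forall fun x => sq_nonneg _) hint
      apply Filter.Eventually.of_forall
      intro x
      have hfx : f x = (p x - a) - (q x - b) := by
        rw [hpq x, hab]; ring
      show (f x) ^ 2 ≤ 2 * (p x - a) ^ 2 + 2 * (q x - b) ^ 2
      rw [hfx]
      nlinarith [sq_nonneg ((p x - a) + (q x - b))]
    rw [integral_add (hpa.integrable_sq.const_mul 2) (hqb.integrable_sq.const_mul 2),
      integral_const_mul, integral_const_mul] at hmono
    exact hmono
  have hfinal : ∫ x, (f x) ^ 2 ∂μ ≤ 4 * κ * S * Sf := by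
    calc ∫ x, (f x) ^ 2 ∂μ ≤ 2 * ∫ x, (p x - a) ^ 2 ∂μ + 2 * ∫ x, (q x - b) ^ 2 ∂μ := hsplit
      _ ≤ 2 * (κ * (S * Sf)) + 2 * (κ * (S * Sf)) := by linarith
      _ = 4 * κ * S * Sf := by ring
  have hsq : Sf ^ 2 = ∫ x, (f x) ^ 2 ∂μ :=
    Real.sq_sqrt (integral_nonneg fun x => sq_nonneg _)
  rcases eq_or_lt_of_le hSf0 with h0 | h0
  · rw [← h0]
    exact mul_nonneg (by positivity) hS0
  · have : Sf * Sf ≤ (4 * κ * S) * Sf := by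
      have := hfinal
      rw [← hsq] at this
      nlinarith
    exact le_of_mul_le_mul_right this h0
end

section
/- Let Γ be a countable discrete group acting on a probability space (X,μ) by measure-preserving transformations, and suppose the action is strongly ergodic but does not have spectral gap. Then there exists a sequence (Aᵢ) of measurable subsets of X with μ(Aᵢ) > 0 for all i, μ(Aᵢ) → 0, and μ(Aᵢ △ γAᵢ)/μ(Aᵢ) → 0 for every γ ∈ Γ. -/
open MeasureTheory Filter
open Set
open scoped ENNReal

section helpers
variable {X : Type*} [MeasurableSpace X] {μ : Measure X}

lemma layercake' [IsFiniteMeasure μ] {w : X → ℝ} (hw : Measurable w) (hnn : 0 ≤ w)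
    (hint : Integrable w μ) :
    ∫⁻ t in Ioi (0:ℝ), μ {x | t < w x} = ENNReal.ofReal (∫ x, w x ∂μ) := by
  rw [ofReal_integral_eq_lintegral_ofReal hint (Eventually.of_forall hnn),
    lintegral_eq_lintegral_meas_lt μ (Eventually.of_forall hnn) hw.aemeasurable]

lemma antitone_meas {w : X → ℝ} : Antitone (fun t => μ {x | t < w x}) :=
  fun s t hst => measure_mono fun x hx => lt_of_le_of_lt hst hx

lemma level_identity [IsFiniteMeasure μ] {w w' : X → ℝ} (hw : Measurable w)
    (hw' : Measurable w') (t : ℝ) :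
    μ (symmDiff {x | t < w x} {x | t < w' x})
      + (μ {x | t < min (w x) (w' x)} + μ {x | t < min (w x) (w' x)})
      = μ {x | t < w x} + μ {x | t < w' x} := by
    have hA : MeasurableSet {x | t < w x} := measurableSet_lt measurable_const hw
    have hB : MeasurableSet {x | t < w' x} := measurableSet_lt measurable_const hw'
    have hI : {x | t < min (w x) (w' x)} = {x | t < w x} ∩ {x | t < w' x} := by
      ext x; simp [lt_min_iff]
    rw [hI]
    have h1 : μ (symmDiff {x | t < w x} {x | t < w' x}) + μ ({x | t < w x} ∩ {x | t < w' x})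
        = μ ({x | t < w x} ∪ {x | t < w' x}) := by
      rw [symmDiff_eq_sup_sdiff_inf]
      have := measure_diff_add_inter (μ := μ) ({x | t < w x} ∪ {x | t < w' x}) (hA.inter hB)
      rwa [inter_eq_self_of_subset_right
        (subset_trans inter_subset_left subset_union_left)] at this
    calc μ (symmDiff {x | t < w x} {x | t < w' x})
        + (μ ({x | t < w x} ∩ {x | t < w' x}) + μ ({x | t < w x} ∩ {x | t < w' x}))
        = (μ (symmDiff {x | t < w x} {x | t < w' x}) + μ ({x | t < w x} ∩ {x | t < w' x}))
          + μ ({x | t < w x} ∩ {x | t < w' x}) := by ring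
      _ = μ ({x | t < w x} ∪ {x | t < w' x}) + μ ({x | t < w x} ∩ {x | t < w' x}) := by rw [h1]
      _ = μ {x | t < w x} + μ {x | t < w' x} := measure_union_add_inter _ hB

lemma level_identity' [IsFiniteMeasure μ] {w w' : X → ℝ} (hw : Measurable w)
    (hw' : Measurable w') (t : ℝ) :
    μ (symmDiff {x | t < w x} {x | t < w' x})
      = (μ {x | t < w x} + μ {x | t < w' x})
        - (μ {x | t < min (w x) (w' x)} + μ {x | t < min (w x) (w' x)}) :=
  ENNReal.eq_sub_of_add_eq (by simp [ENNReal.add_ne_top, measure_ne_top])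
    (level_identity hw hw' t)

lemma symmdiff_meas_measurable [IsFiniteMeasure μ] {w w' : X → ℝ} (hw : Measurable w)
    (hw' : Measurable w') :
    Measurable (fun t : ℝ => μ (symmDiff {x | t < w x} {x | t < w' x})) := by
  simp only [fun t => level_identity' (μ := μ) hw hw' t]
  exact ((antitone_meas.measurable.add antitone_meas.measurable).sub
    (antitone_meas.measurable.add antitone_meas.measurable))

lemma symmdiff_layercake [IsFiniteMeasure μ] {w w' : X → ℝ} (hw : Measurable w)
    (hw' : Measurable w') (hnn : 0 ≤ w) (hnn' : 0 ≤ w')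
    (hint : Integrable w μ) (hint' : Integrable w' μ) :
    ∫⁻ t in Ioi (0:ℝ), μ (symmDiff {x | t < w x} {x | t < w' x})
      = ENNReal.ofReal (∫ x, |w x - w' x| ∂μ) := by
  have hmin : Measurable (fun x => min (w x) (w' x)) := hw.min hw'
  have hminnn : 0 ≤ fun x => min (w x) (w' x) := fun x => le_min (hnn x) (hnn' x)
  have hminint : Integrable (fun x => min (w x) (w' x)) μ := by
    refine hint.mono hmin.aestronglyMeasurable (Eventually.of_forall fun x => ?_)
    simp only [Real.norm_eq_abs, abs_of_nonneg (hminnn x), abs_of_nonneg (hnn x)]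
    exact min_le_left _ _
  have habsint : Integrable (fun x => |w x - w' x|) μ := (hint.sub hint').abs
  have key := fun t => level_identity (μ := μ) hw hw' t
  have hMmeas : Measurable (fun t : ℝ => μ {x | t < min (w x) (w' x)}) :=
    antitone_meas.measurable
  have hFmeas : Measurable (fun t : ℝ => μ {x | t < w x}) := antitone_meas.measurable
  have hF'meas : Measurable (fun t : ℝ => μ {x | t < w' x}) := antitone_meas.measurable
  have lhs : ∫⁻ t in Ioi (0:ℝ), (μ (symmDiff {x | t < w x} {x | t < w' x})
      + (μ {x | t < min (w x) (w' x)} + μ {x | t < min (w x) (w' x)}))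
      = ∫⁻ t in Ioi (0:ℝ), (μ {x | t < w x} + μ {x | t < w' x}) :=
    lintegral_congr (fun t => key t)
  rw [lintegral_add_right _ (show Measurable fun t : ℝ => μ {x | t < min (w x) (w' x)} + μ {x | t < min (w x) (w' x)} from hMmeas.add hMmeas), lintegral_add_right _ hMmeas,
    lintegral_add_right _ hF'meas, layercake' hmin hminnn hminint, layercake' hw hnn hint,
    layercake' hw' hnn' hint'] at lhs
  have pw : ∀ x, w x + w' x = |w x - w' x| + (min (w x) (w' x) + min (w x) (w' x)) := by
    intro x
    rcases le_total (w x) (w' x) with h | h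
    · rw [abs_of_nonpos (by linarith), min_eq_left h]; ring
    · rw [abs_of_nonneg (by linarith), min_eq_right h]; ring
  have e2int : Integrable (fun x => min (w x) (w' x) + min (w x) (w' x)) μ :=
    hminint.add hminint
  have e3 : ∫ x, (min (w x) (w' x) + min (w x) (w' x)) ∂μ
      = ∫ x, min (w x) (w' x) ∂μ + ∫ x, min (w x) (w' x) ∂μ := integral_add hminint hminint
  have e2 : ∫ x, (|w x - w' x| + (min (w x) (w' x) + min (w x) (w' x))) ∂μ
      = ∫ x, |w x - w' x| ∂μ + ∫ x, (min (w x) (w' x) + min (w x) (w' x)) ∂μ :=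
    integral_add habsint e2int
  have e1 : ∫ x, (w x + w' x) ∂μ = ∫ x, w x ∂μ + ∫ x, w' x ∂μ := integral_add hint hint'
  have e0 : ∫ x, (w x + w' x) ∂μ
      = ∫ x, (|w x - w' x| + (min (w x) (w' x) + min (w x) (w' x))) ∂μ :=
    integral_congr_ae (Eventually.of_forall pw)
  have hsum : ∫ x, w x ∂μ + ∫ x, w' x ∂μ = ∫ x, |w x - w' x| ∂μ
      + (∫ x, min (w x) (w' x) ∂μ + ∫ x, min (w x) (w' x) ∂μ) := by
    rw [← e1, e0, e2, e3]
  have nnJ : (0:ℝ) ≤ ∫ x, min (w x) (w' x) ∂μ := integral_nonneg hminnn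
  have nnA : (0:ℝ) ≤ ∫ x, |w x - w' x| ∂μ := integral_nonneg fun x => abs_nonneg _
  have hne : (ENNReal.ofReal (∫ x, min (w x) (w' x) ∂μ)
      + ENNReal.ofReal (∫ x, min (w x) (w' x) ∂μ)) ≠ ⊤ := by
    simp [ENNReal.add_ne_top]
  have rhs : ENNReal.ofReal (∫ x, w x ∂μ) + ENNReal.ofReal (∫ x, w' x ∂μ)
      = ENNReal.ofReal (∫ x, |w x - w' x| ∂μ)
        + (ENNReal.ofReal (∫ x, min (w x) (w' x) ∂μ)
          + ENNReal.ofReal (∫ x, min (w x) (w' x) ∂μ)) := by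
    rw [← ENNReal.ofReal_add (integral_nonneg hnn) (integral_nonneg hnn'), hsum,
      ENNReal.ofReal_add nnA (by linarith), ENNReal.ofReal_add nnJ nnJ]
  exact (ENNReal.add_left_inj hne).mp (lhs.trans rhs)

lemma young_ineq' (a b ε : ℝ) (hε : 0 < ε) : a * b ≤ ε/2 * a^2 + 1/(2*ε) * b^2 := by
  rw [← sub_nonneg]
  have h : ε/2 * a^2 + 1/(2*ε) * b^2 - a * b = (ε*a - b)^2/(2*ε) := by field_simp; ring
  rw [h]; positivity

lemma young_ineq (a b ε : ℝ) (hε : 0 < ε) : |a * b| ≤ ε/2 * a^2 + 1/(2*ε) * b^2 := by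
  rw [abs_le]
  refine ⟨?_, young_ineq' a b ε hε⟩
  have h := young_ineq' (-a) b ε hε
  have h2 : ε/2 * (-a)^2 = ε/2 * a^2 := by ring
  rw [neg_mul, h2] at h
  linarith

lemma select [IsProbabilityMeasure μ] (m : ℕ) (σ : Fin m → X ≃ᵐ X)
    (hσ : ∀ k, MeasurePreserving (σ k) μ μ) {v : X → ℝ} (hv : Measurable v)
    (hv2 : MemLp v 2 μ) (hvnn : 0 ≤ v) (hlow : 1/2 ≤ ∫ x, v x ^ 2 ∂μ)
    (hup : ∫ x, v x ^ 2 ∂μ ≤ 5) (hhalf : μ {x | 0 < v x} ≤ 1/2)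
    (hρ : ∑ k, ∫ x, (v (σ k x) - v x) ^ 2 ∂μ ≤ 1 / ((m:ℝ)+1)^3) :
    ∃ A : Set X, MeasurableSet A ∧ 0 < μ A ∧ μ A ≤ 1/2 ∧
      ∀ k : Fin m, (μ (symmDiff A ((σ k) ⁻¹' A))).toReal ≤ 24/((m:ℝ)+1) * (μ A).toReal := by
  by_contra hcon
  push_neg at hcon
  set w : X → ℝ := fun x => v x ^ 2 with hw_def
  have hw : Measurable w := hv.pow_const 2
  have hwnn : 0 ≤ w := fun x => sq_nonneg _
  have hwint : Integrable w μ := hv2.integrable_sq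
  have hvk2 : ∀ k : Fin m, MemLp (fun x => v (σ k x)) 2 μ := fun k =>
    hv2.comp_measurePreserving (hσ k)
  set wk : Fin m → X → ℝ := fun k x => v (σ k x) ^ 2 with hwk_def
  have hwkmeas : ∀ k, Measurable (wk k) := fun k => (hv.comp (σ k).measurable).pow_const 2
  have hwkint : ∀ k, Integrable (wk k) μ := fun k => (hvk2 k).integrable_sq
  have hwknn : ∀ k, 0 ≤ wk k := fun k x => sq_nonneg _
  have hwkint_eq : ∀ k, ∫ x, wk k x ∂μ = ∫ x, w x ∂μ := fun k =>
    (hσ k).integral_comp (σ k).measurableEmbedding w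
  have hM : (0:ℝ) < (m:ℝ)+1 := by positivity
  -- pointwise bound from the contradiction hypothesis
  have hptw : ∀ t ∈ Ioi (0:ℝ), ENNReal.ofReal (24/((m:ℝ)+1)) * μ {x | t < w x}
      ≤ ∑ k, μ (symmDiff {x | t < w x} {x | t < wk k x}) := by
    intro t ht
    have hA : MeasurableSet {x | t < w x} := measurableSet_lt measurable_const hw
    rcases eq_or_ne (μ {x | t < w x}) 0 with h0 | h0
    · simp [h0]
    have hsub : {x | t < w x} ⊆ {x | 0 < v x} := by
      intro x hx
      have h2 : (0:ℝ) < v x ^ 2 := lt_trans ht hx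
      rcases (hvnn x).lt_or_eq with h | h
      · exact h
      · exfalso; rw [← h] at h2; simp at h2
    obtain ⟨k, hk⟩ := hcon {x | t < w x} hA (pos_iff_ne_zero.mpr h0)
      (le_trans (measure_mono hsub) hhalf)
    have hDeq : (σ k) ⁻¹' {x | t < w x} = {x | t < wk k x} := rfl
    rw [hDeq] at hk
    calc ENNReal.ofReal (24/((m:ℝ)+1)) * μ {x | t < w x}
        = ENNReal.ofReal (24/((m:ℝ)+1) * (μ {x | t < w x}).toReal) := by
          rw [ENNReal.ofReal_mul (by positivity), ENNReal.ofReal_toReal (measure_ne_top μ _)]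
      _ ≤ ENNReal.ofReal ((μ (symmDiff {x | t < w x} {x | t < wk k x})).toReal) :=
          ENNReal.ofReal_le_ofReal hk.le
      _ = μ (symmDiff {x | t < w x} {x | t < wk k x}) :=
          ENNReal.ofReal_toReal (measure_ne_top μ _)
      _ ≤ ∑ k', μ (symmDiff {x | t < w x} {x | t < wk k' x}) :=
          Finset.single_le_sum
            (f := fun k' => μ (symmDiff {x | t < w x} {x | t < wk k' x}))
            (fun k' _ => by simp) (Finset.mem_univ k)
  -- integrate over t ∈ (0,∞)
  have hint_le : ENNReal.ofReal (24/((m:ℝ)+1) * ∫ x, w x ∂μ)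
      ≤ ENNReal.ofReal (∑ k, ∫ x, |w x - wk k x| ∂μ) := by
    have h1 : ∫⁻ t in Ioi (0:ℝ), ENNReal.ofReal (24/((m:ℝ)+1)) * μ {x | t < w x}
        ≤ ∫⁻ t in Ioi (0:ℝ), ∑ k, μ (symmDiff {x | t < w x} {x | t < wk k x}) :=
      lintegral_mono_ae ((ae_restrict_iff' measurableSet_Ioi).mpr (ae_of_all _ hptw))
    rw [lintegral_const_mul' _ _ ENNReal.ofReal_ne_top, layercake' hw hwnn hwint,
      lintegral_finset_sum' Finset.univ
        (fun k _ => (symmdiff_meas_measurable hw (hwkmeas k)).aemeasurable)] at h1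
    calc ENNReal.ofReal (24/((m:ℝ)+1) * ∫ x, w x ∂μ)
        = ENNReal.ofReal (24/((m:ℝ)+1)) * ENNReal.ofReal (∫ x, w x ∂μ) :=
          ENNReal.ofReal_mul (by positivity)
      _ ≤ ∑ k, ∫⁻ t in Ioi (0:ℝ), μ (symmDiff {x | t < w x} {x | t < wk k x}) := h1
      _ = ∑ k, ENNReal.ofReal (∫ x, |w x - wk k x| ∂μ) :=
          Finset.sum_congr rfl (fun k _ =>
            symmdiff_layercake hw (hwkmeas k) hwnn (hwknn k) hwint (hwkint k))
      _ = ENNReal.ofReal (∑ k, ∫ x, |w x - wk k x| ∂μ) :=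
          (ENNReal.ofReal_sum_of_nonneg
            (fun k _ => integral_nonneg (fun x => abs_nonneg _))).symm
  have hreal : 24/((m:ℝ)+1) * ∫ x, w x ∂μ ≤ ∑ k, ∫ x, |w x - wk k x| ∂μ :=
    (ENNReal.ofReal_le_ofReal_iff
      (Finset.sum_nonneg fun k _ => integral_nonneg fun x => abs_nonneg _)).mp hint_le
  -- upper bound on each term
  have habs_bd : ∀ k : Fin m, ∫ x, |w x - wk k x| ∂μ
      ≤ ((m:ℝ)+1)^2/2 * ∫ x, (v (σ k x) - v x)^2 ∂μ + 10/((m:ℝ)+1)^2 := by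
    intro k
    set ε : ℝ := ((m:ℝ)+1)^2 with hε_def
    have hε : 0 < ε := by positivity
    have hsubint : Integrable (fun x => (v (σ k x) - v x)^2) μ :=
      ((hvk2 k).sub hv2).integrable_sq
    have haddint : Integrable (fun x => (v (σ k x) + v x)^2) μ :=
      ((hvk2 k).add hv2).integrable_sq
    have hpt : ∀ x, |w x - wk k x|
        ≤ ε/2 * (v (σ k x) - v x)^2 + 1/(2*ε) * (v (σ k x) + v x)^2 := by
      intro x
      have h1 : w x - wk k x = (v (σ k x) - v x) * (-(v (σ k x) + v x)) := by
        simp only [hw_def, hwk_def]; ring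
      calc |w x - wk k x| = |(v (σ k x) - v x) * (v (σ k x) + v x)| := by
            rw [h1, abs_mul, abs_mul, abs_neg]
        _ ≤ ε/2 * (v (σ k x) - v x)^2 + 1/(2*ε) * (v (σ k x) + v x)^2 :=
            young_ineq _ _ _ hε
    have hmono : ∫ x, |w x - wk k x| ∂μ
        ≤ ∫ x, (ε/2 * (v (σ k x) - v x)^2 + 1/(2*ε) * (v (σ k x) + v x)^2) ∂μ :=
      integral_mono (hwint.sub (hwkint k)).abs
        ((hsubint.const_mul _).add (haddint.const_mul _)) hpt
    rw [integral_add (hsubint.const_mul _) (haddint.const_mul _),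
      integral_const_mul, integral_const_mul] at hmono
    have hadd_bd : ∫ x, (v (σ k x) + v x)^2 ∂μ ≤ 20 := by
      have h2 : ∀ x, (v (σ k x) + v x)^2 ≤ 2 * (v (σ k x))^2 + 2 * (v x)^2 := by
        intro x; nlinarith [sq_nonneg (v (σ k x) - v x)]
      have h3 : ∫ x, (v (σ k x) + v x)^2 ∂μ
          ≤ ∫ x, (2 * (v (σ k x))^2 + 2 * (v x)^2) ∂μ :=
        integral_mono haddint (((hwkint k).const_mul _).add (hwint.const_mul _)) h2
      rw [integral_add ((hwkint k).const_mul _) (hwint.const_mul _),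
        integral_const_mul, integral_const_mul] at h3
      have h4 : ∫ x, (v (σ k x))^2 ∂μ = ∫ x, v x ^ 2 ∂μ := hwkint_eq k
      linarith
    have h5 : 1/(2*ε) * ∫ x, (v (σ k x) + v x)^2 ∂μ ≤ 1/(2*ε) * 20 := by
      apply mul_le_mul_of_nonneg_left hadd_bd (by positivity)
    have h6 : 1/(2*ε) * 20 = 10/ε := by
      rw [div_mul_eq_mul_div, one_mul, div_eq_div_iff (by positivity : (0:ℝ) < 2*ε).ne' hε.ne']
      ring
    linarith
  -- combine
  have hsum_bd : ∑ k, ∫ x, |w x - wk k x| ∂μ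
      ≤ ((m:ℝ)+1)^2/2 * (∑ k, ∫ x, (v (σ k x) - v x)^2 ∂μ) + m * (10/((m:ℝ)+1)^2) := by
    calc ∑ k, ∫ x, |w x - wk k x| ∂μ
        ≤ ∑ k : Fin m, (((m:ℝ)+1)^2/2 * ∫ x, (v (σ k x) - v x)^2 ∂μ + 10/((m:ℝ)+1)^2) :=
          Finset.sum_le_sum fun k _ => habs_bd k
      _ = ((m:ℝ)+1)^2/2 * (∑ k, ∫ x, (v (σ k x) - v x)^2 ∂μ) + m * (10/((m:ℝ)+1)^2) := by
          rw [Finset.sum_add_distrib, ← Finset.mul_sum, Finset.sum_const, Finset.card_univ,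
            Fintype.card_fin, nsmul_eq_mul]
  have hfinal : ∑ k, ∫ x, (v (σ k x) - v x)^2 ∂μ ≥ 0 :=
    Finset.sum_nonneg fun k _ => integral_nonneg fun x => sq_nonneg _
  have hb1 : ((m:ℝ)+1)^2/2 * (∑ k, ∫ x, (v (σ k x) - v x)^2 ∂μ)
      ≤ ((m:ℝ)+1)^2/2 * (1 / ((m:ℝ)+1)^3) := by
    apply mul_le_mul_of_nonneg_left hρ (by positivity)
  have hb2 : ((m:ℝ)+1)^2/2 * (1 / ((m:ℝ)+1)^3) = 1/(2*((m:ℝ)+1)) := by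
    field_simp
  have hb3 : (m:ℝ) * (10/((m:ℝ)+1)^2) ≤ 10/((m:ℝ)+1) := by
    rw [show (m:ℝ) * (10/((m:ℝ)+1)^2) = 10*(m:ℝ)/((m:ℝ)+1)^2 by ring,
      div_le_div_iff₀ (by positivity) hM]
    nlinarith
  have hlhs : 12/((m:ℝ)+1) ≤ 24/((m:ℝ)+1) * ∫ x, w x ∂μ := by
    have := mul_le_mul_of_nonneg_left hlow (le_of_lt (show (0:ℝ) < 24/((m:ℝ)+1) by positivity))
    calc 12/((m:ℝ)+1) = 24/((m:ℝ)+1) * (1/2) := by ring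
      _ ≤ 24/((m:ℝ)+1) * ∫ x, w x ∂μ := this
  have hcontra : 12/((m:ℝ)+1) ≤ 1/(2*((m:ℝ)+1)) + 10/((m:ℝ)+1) := by
    calc 12/((m:ℝ)+1) ≤ 24/((m:ℝ)+1) * ∫ x, w x ∂μ := hlhs
      _ ≤ ∑ k, ∫ x, |w x - wk k x| ∂μ := hreal
      _ ≤ ((m:ℝ)+1)^2/2 * (∑ k, ∫ x, (v (σ k x) - v x)^2 ∂μ) + m * (10/((m:ℝ)+1)^2) := hsum_bd
      _ ≤ 1/(2*((m:ℝ)+1)) + 10/((m:ℝ)+1) := by linarith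
  have h2 : 12/((m:ℝ)+1) - (1/(2*((m:ℝ)+1)) + 10/((m:ℝ)+1)) = 3/(2*((m:ℝ)+1)) := by
    field_simp; ring
  have h3 : (0:ℝ) < 3/(2*((m:ℝ)+1)) := by positivity
  linarith

lemma le_half_iff {a : ℝ≥0∞} (ha : a ≠ ⊤) : a ≤ 1/2 ↔ a.toReal ≤ 1/2 := by
  rw [show ((1:ℝ≥0∞)/2) = ENNReal.ofReal (1/2) by
    rw [ENNReal.ofReal_div_of_pos (by norm_num)]; norm_num,
    ENNReal.le_ofReal_iff_toReal_le ha (by norm_num)]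

lemma select' [IsProbabilityMeasure μ] (m : ℕ) (σ : Fin m → X ≃ᵐ X)
    (hσ : ∀ k, MeasurePreserving (σ k) μ μ) {h v : X → ℝ} (hv : Measurable v)
    (hv2 : MemLp v 2 μ) (hvnn : 0 ≤ v) (hlow : 1/2 ≤ ∫ x, v x ^ 2 ∂μ)
    (hup : ∫ x, v x ^ 2 ∂μ ≤ 5) (hhalf : μ {x | 0 < v x} ≤ 1/2)
    (hh2 : MemLp h 2 μ)
    (hlip : ∀ x y : X, |v x - v y| ≤ |h x - h y|)
    (hρ : ∑ k, ∫ x, (h (σ k x) - h x) ^ 2 ∂μ ≤ 1 / ((m:ℝ)+1)^3) :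
    ∃ A : Set X, MeasurableSet A ∧ 0 < μ A ∧ μ A ≤ 1/2 ∧
      ∀ k : Fin m, (μ (symmDiff A ((σ k) ⁻¹' A))).toReal ≤ 24/((m:ℝ)+1) * (μ A).toReal := by
  refine select m σ hσ hv hv2 hvnn hlow hup hhalf (le_trans ?_ hρ)
  refine Finset.sum_le_sum fun k _ => integral_mono ?_ ?_ ?_
  · exact ((hv2.comp_measurePreserving (hσ k)).sub hv2).integrable_sq
  · exact ((hh2.comp_measurePreserving (hσ k)).sub hh2).integrable_sq
  · intro x
    have h1 : |v (σ k x) - v x| ≤ |h (σ k x) - h x| := hlip _ _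
    calc (v (σ k x) - v x)^2 = |v (σ k x) - v x|^2 := (sq_abs _).symm
      _ ≤ |h (σ k x) - h x|^2 := by
          exact pow_le_pow_left₀ (abs_nonneg _) h1 2
      _ = (h (σ k x) - h x)^2 := sq_abs _

lemma keylemma [IsProbabilityMeasure μ] (m : ℕ) (σ : Fin m → X ≃ᵐ X)
    (hσ : ∀ k, MeasurePreserving (σ k) μ μ) {h : X → ℝ} (hmeas : Measurable h)
    (h2 : MemLp h 2 μ) (hmean : ∫ x, h x ∂μ = 0) (hnorm : ∫ x, h x ^ 2 ∂μ = 1)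
    (hρ : ∑ k, ∫ x, (h (σ k x) - h x) ^ 2 ∂μ ≤ 1 / ((m:ℝ)+1)^3) :
    ∃ A : Set X, MeasurableSet A ∧ 0 < μ A ∧ μ A ≤ 1/2 ∧
      ∀ k : Fin m, (μ (symmDiff A ((σ k) ⁻¹' A))).toReal ≤ 24/((m:ℝ)+1) * (μ A).toReal := by
  have hint : Integrable h μ := h2.integrable one_le_two
  have hsqint : Integrable (fun x => h x ^ 2) μ := h2.integrable_sq
  -- Chebyshev-type bound
  have cheb : (μ {x | (4:ℝ) ≤ h x ^ 2}).toReal ≤ 1/4 := by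
    have h1 : (4:ℝ≥0∞) * μ {x | (4:ℝ≥0∞) ≤ ENNReal.ofReal (h x ^ 2)}
        ≤ ∫⁻ x, ENNReal.ofReal (h x ^ 2) ∂μ :=
      mul_meas_ge_le_lintegral₀ ((hmeas.pow_const 2).aemeasurable.ennreal_ofReal) 4
    have hseq : {x | (4:ℝ≥0∞) ≤ ENNReal.ofReal (h x ^ 2)} = {x | (4:ℝ) ≤ h x ^ 2} := by
      ext x
      rw [Set.mem_setOf_eq, Set.mem_setOf_eq, show (4:ℝ≥0∞) = ENNReal.ofReal 4 by norm_num,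
        ENNReal.ofReal_le_ofReal_iff (sq_nonneg _)]
    have hlint : ∫⁻ x, ENNReal.ofReal (h x ^ 2) ∂μ = 1 := by
      rw [← ofReal_integral_eq_lintegral_ofReal hsqint (ae_of_all _ fun x => sq_nonneg _),
        hnorm]
      norm_num
    rw [hseq, hlint] at h1
    have h3 : μ {x | (4:ℝ) ≤ h x ^ 2} ≤ 1/4 := by
      rw [ENNReal.le_div_iff_mul_le (Or.inl (by norm_num)) (Or.inl (by norm_num))]
      rwa [mul_comm] at h1
    calc (μ {x | (4:ℝ) ≤ h x ^ 2}).toReal ≤ ((1:ℝ≥0∞)/4).toReal :=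
          ENNReal.toReal_mono (by norm_num) h3
      _ = 1/4 := by norm_num
  -- the distribution function and median
  set G : ℝ → ℝ := fun t => (μ {x | t < h x}).toReal with hG_def
  have hGanti : Antitone G := fun s t hst => ENNReal.toReal_mono (measure_ne_top μ _)
    (measure_mono fun x hx => lt_of_le_of_lt hst hx)
  have hG2 : G 2 ≤ 1/2 := by
    have hsub : {x | (2:ℝ) < h x} ⊆ {x | (4:ℝ) ≤ h x ^ 2} := by
      intro x hx
      have : (2:ℝ) < h x := hx
      simp only [Set.mem_setOf_eq]
      nlinarith
    calc G 2 ≤ (μ {x | (4:ℝ) ≤ h x ^ 2}).toReal :=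
          ENNReal.toReal_mono (measure_ne_top μ _) (measure_mono hsub)
      _ ≤ 1/4 := cheb
      _ ≤ 1/2 := by norm_num
  set S : Set ℝ := {t | G t ≤ 1/2} with hS_def
  have hSne : S.Nonempty := ⟨2, hG2⟩
  have hcompl : ∀ t : ℝ, (μ {x | h x ≤ t}).toReal = 1 - G t := by
    intro t
    have hms : MeasurableSet {x | t < h x} := measurableSet_lt measurable_const hmeas
    have : {x | h x ≤ t} = {x | t < h x}ᶜ := by ext x; simp [not_lt]
    rw [this, prob_compl_eq_one_sub hms, ENNReal.toReal_sub_of_le prob_le_one ENNReal.one_ne_top]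
    simp [hG_def]
  have hSlb : ∀ t ∈ S, (-2:ℝ) ≤ t := by
    intro t ht
    by_contra hlt
    push_neg at hlt
    have hsub : {x | h x ≤ t} ⊆ {x | (4:ℝ) ≤ h x ^ 2} := by
      intro x hx
      have : h x ≤ t := hx
      simp only [Set.mem_setOf_eq]
      nlinarith
    have h4 : (μ {x | h x ≤ t}).toReal ≤ 1/4 :=
      le_trans (ENNReal.toReal_mono (measure_ne_top μ _) (measure_mono hsub)) cheb
    rw [hcompl t] at h4
    have : G t ≤ 1/2 := ht
    linarith
  have hSbdd : BddBelow S := ⟨-2, hSlb⟩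
  set c : ℝ := sInf S with hc_def
  have hcle : c ≤ 2 := csInf_le hSbdd hG2
  have hcge : (-2:ℝ) ≤ c := le_csInf hSne hSlb
  have hgt : ∀ t, c < t → G t ≤ 1/2 := by
    intro t ht
    obtain ⟨s, hsS, hst⟩ := exists_lt_of_csInf_lt hSne ht
    exact le_trans (hGanti hst.le) hsS
  have hlt : ∀ t, t < c → 1/2 < G t := by
    intro t ht
    by_contra hle
    push_neg at hle
    exact absurd (csInf_le hSbdd hle) (not_le.mpr ht)
  -- μ {c < h} ≤ 1/2
  have hA : μ {x | c < h x} ≤ 1/2 := by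
    have hun : {x | c < h x} = ⋃ n : ℕ, {x | c + 1/(n+1) < h x} := by
      ext x
      simp only [Set.mem_setOf_eq, Set.mem_iUnion]
      constructor
      · intro hx
        obtain ⟨n, hn⟩ := exists_nat_one_div_lt (sub_pos.mpr hx)
        exact ⟨n, by push_cast at hn ⊢; linarith⟩
      · rintro ⟨n, hn⟩
        have : (0:ℝ) < 1/(n+1) := by positivity
        linarith
    have hdir : Directed (· ⊆ ·) (fun n : ℕ => {x | c + 1/((n:ℝ)+1) < h x}) := by
      apply Monotone.directed_le
      intro a b hab x hx
      simp only [Set.mem_setOf_eq] at hx ⊢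
      have : (1:ℝ)/((b:ℝ)+1) ≤ 1/((a:ℝ)+1) := by
        apply one_div_le_one_div_of_le (by positivity)
        exact_mod_cast by omega
      linarith
    rw [hun, hdir.measure_iUnion]
    refine iSup_le fun n => ?_
    rw [le_half_iff (measure_ne_top μ _)]
    refine hgt _ ?_
    have h0 : (0:ℝ) < 1/((n:ℝ)+1) := by positivity
    linarith
  -- μ {h < c} ≤ 1/2
  have hB : μ {x | h x < c} ≤ 1/2 := by
    have hun : {x | h x < c} = ⋃ n : ℕ, {x | h x ≤ c - 1/(n+1)} := by
      ext x
      simp only [Set.mem_setOf_eq, Set.mem_iUnion]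
      constructor
      · intro hx
        obtain ⟨n, hn⟩ := exists_nat_one_div_lt (sub_pos.mpr hx)
        exact ⟨n, by push_cast at hn ⊢; linarith⟩
      · rintro ⟨n, hn⟩
        have : (0:ℝ) < 1/(n+1) := by positivity
        linarith
    have hdir : Directed (· ⊆ ·) (fun n : ℕ => {x | h x ≤ c - 1/((n:ℝ)+1)}) := by
      apply Monotone.directed_le
      intro a b hab x hx
      simp only [Set.mem_setOf_eq] at hx ⊢
      have : (1:ℝ)/((b:ℝ)+1) ≤ 1/((a:ℝ)+1) := by
        apply one_div_le_one_div_of_le (by positivity)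
        exact_mod_cast by omega
      linarith
    rw [hun, hdir.measure_iUnion]
    refine iSup_le fun n => ?_
    rw [le_half_iff (measure_ne_top μ _), hcompl]
    have h5 : 1/2 < G (c - 1/((n:ℝ)+1)) := by
      apply hlt
      have : (0:ℝ) < 1/((n:ℝ)+1) := by positivity
      linarith
    linarith
  -- split into positive and negative part around the median c
  have habs_max : ∀ a : ℝ, |max a 0| ≤ |a| := by
    intro a
    rw [abs_of_nonneg (le_max_right a 0)]
    exact max_le (le_abs_self a) (abs_nonneg a)
  set vp : X → ℝ := fun x => max (h x - c) 0 with hvp_def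
  set vq : X → ℝ := fun x => max (c - h x) 0 with hvq_def
  have hvpmeas : Measurable vp := (hmeas.sub measurable_const).max measurable_const
  have hvqmeas : Measurable vq := (measurable_const.sub hmeas).max measurable_const
  have hhc2 : MemLp (fun x => h x - c) 2 μ := h2.sub (memLp_const c)
  have hch2 : MemLp (fun x => c - h x) 2 μ := (memLp_const c).sub h2
  have hvp2 : MemLp vp 2 μ :=
    hhc2.of_le hvpmeas.aestronglyMeasurable (ae_of_all _ fun x => by
      simpa [Real.norm_eq_abs] using habs_max (h x - c))
  have hvq2 : MemLp vq 2 μ :=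
    hch2.of_le hvqmeas.aestronglyMeasurable (ae_of_all _ fun x => by
      simpa [Real.norm_eq_abs] using habs_max (c - h x))
  have hvpnn : 0 ≤ vp := fun x => le_max_right _ _
  have hvqnn : 0 ≤ vq := fun x => le_max_right _ _
  set p : ℝ := ∫ x, vp x ^ 2 ∂μ with hp_def
  set q : ℝ := ∫ x, vq x ^ 2 ∂μ with hq_def
  have hpnn : 0 ≤ p := integral_nonneg fun x => sq_nonneg _
  have hqnn : 0 ≤ q := integral_nonneg fun x => sq_nonneg _
  have hcsq : c^2 ≤ 4 := by nlinarith
  have hpq : p + q = 1 + c^2 := by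
    have hpt : ∀ x, vp x ^ 2 + vq x ^ 2 = (h x - c)^2 := by
      intro x
      rcases le_total (h x - c) 0 with hx | hx
      · rw [hvp_def, hvq_def]
        simp only []
        rw [max_eq_right hx, max_eq_left (by linarith : (0:ℝ) ≤ c - h x)]
        ring
      · rw [hvp_def, hvq_def]
        simp only []
        rw [max_eq_left hx, max_eq_right (by linarith : c - h x ≤ (0:ℝ))]
        ring
    have e1 : ∫ x, (vp x ^ 2 + vq x ^ 2) ∂μ = ∫ x, (h x - c)^2 ∂μ :=
      integral_congr_ae (ae_of_all _ hpt)
    rw [integral_add hvp2.integrable_sq hvq2.integrable_sq] at e1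
    have e2 : ∫ x, (h x - c)^2 ∂μ = ∫ x, (h x ^ 2 - (2*c) * h x + c^2) ∂μ :=
      integral_congr_ae (ae_of_all _ fun x => by ring)
    have i1 : Integrable (fun x => h x ^ 2 - (2*c) * h x) μ := by
      exact hsqint.sub (hint.const_mul _)
    have i2 : Integrable (fun x => (2*c) * h x) μ := hint.const_mul _
    rw [integral_add i1 (integrable_const _), integral_sub hsqint i2,
      integral_const_mul, hmean, hnorm, integral_const] at e2
    simp only [measure_univ, probReal_univ, ENNReal.toReal_one, one_smul, smul_eq_mul, mul_zero, sub_zero] at e2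
    rw [hp_def, hq_def, e1, e2]; ring
  rcases le_total q p with hqp | hpq'
  · -- use the positive part
    refine select' m σ hσ hvpmeas hvp2 hvpnn ?_ ?_ ?_ h2 ?_ hρ
    · show (1:ℝ)/2 ≤ p
      nlinarith [sq_nonneg c]
    · show p ≤ 5
      linarith
    · have : {x | 0 < vp x} = {x | c < h x} := by
        ext x
        simp only [hvp_def, Set.mem_setOf_eq, lt_max_iff, lt_self_iff_false, or_false,
          sub_pos]
      rw [this]; exact hA
    · intro x y
      have := abs_max_sub_max_le_abs (h x - c) (h y - c) 0
      simpa using this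
  · -- use the negative part
    refine select' m σ hσ hvqmeas hvq2 hvqnn ?_ ?_ ?_ h2 ?_ hρ
    · show (1:ℝ)/2 ≤ q
      nlinarith [sq_nonneg c]
    · show q ≤ 5
      linarith
    · have : {x | 0 < vq x} = {x | h x < c} := by
        ext x
        simp only [hvq_def, Set.mem_setOf_eq, lt_max_iff, lt_self_iff_false, or_false,
          sub_pos]
      rw [this]; exact hB
    · intro x y
      have h1 := abs_max_sub_max_le_abs (c - h x) (c - h y) 0
      have h2 : (c - h x) - (c - h y) = -(h x - h y) := by ring
      rw [h2, abs_neg] at h1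
      exact h1

end helpers

/-- A pmp action of a countable discrete group `Γ` on `(X, μ)` which is strongly ergodic
but has no spectral gap admits an I-sequence: a sequence `(Aᵢ)` of measurable sets of
positive measure with `μ(Aᵢ) → 0` and `μ(Aᵢ △ γAᵢ)/μ(Aᵢ) → 0` for every `γ ∈ Γ`. -/
theorem stmt7 {Γ : Type*} [Group Γ] [Countable Γ]
    {X : Type*} [MeasurableSpace X] (μ : Measure X) [IsProbabilityMeasure μ]
    (α : Γ → X ≃ᵐ X)
    (haction : ∀ g h : Γ, ∀ x : X, α (g * h) x = α g (α h x))
    (hpmp : ∀ g : Γ, MeasurePreserving (α g) μ μ)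
    (hse : ∀ A : ℕ → Set X, (∀ n, MeasurableSet (A n)) →
      (∀ g : Γ, Tendsto (fun n => (μ (symmDiff (A n) (α g '' A n))).toReal) atTop (nhds 0)) →
      Tendsto (fun n => (μ (A n)).toReal * (1 - (μ (A n)).toReal)) atTop (nhds 0))
    (hnogap : ¬ ∃ (n : ℕ) (γ : Fin n → Γ) (κ : ℝ), 0 < κ ∧
      ∀ f : X → ℝ, MemLp f 2 μ →
        ∫ x, (f x - ∫ y, f y ∂μ) ^ 2 ∂μ
          ≤ κ * ∑ k, ∫ x, (f ((α (γ k)).symm x) - f x) ^ 2 ∂μ) :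
    ∃ A : ℕ → Set X, (∀ i, MeasurableSet (A i)) ∧ (∀ i, 0 < μ (A i)) ∧
      Tendsto (fun i => (μ (A i)).toReal) atTop (nhds 0) ∧
      ∀ g : Γ, Tendsto
        (fun i => (μ (symmDiff (A i) (α g '' A i))).toReal / (μ (A i)).toReal)
        atTop (nhds 0) := by
  obtain ⟨e, he⟩ := exists_surjective_nat Γ
  push_neg at hnogap
  have main : ∀ m : ℕ, ∃ A : Set X, MeasurableSet A ∧ 0 < μ A ∧ μ A ≤ 1/2 ∧
      ∀ k : Fin m, (μ (symmDiff A ((α (e k)) '' A))).toReal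
        ≤ 24/((m:ℝ)+1) * (μ A).toReal := by
    intro m
    obtain ⟨f, hf2, hflt⟩ := hnogap m (fun k => e k) (((m:ℝ)+1)^3) (by positivity)
    set σ : Fin m → X ≃ᵐ X := fun k => (α (e k)).symm with hσ_def
    have hσ : ∀ k, MeasurePreserving (σ k) μ μ := fun k => (hpmp (e k)).symm (α (e k))
    set f' : X → ℝ := hf2.1.mk f with hf'_def
    have hf'meas : Measurable f' := hf2.1.stronglyMeasurable_mk.measurable
    have hae : f =ᵐ[μ] f' := hf2.1.ae_eq_mk
    have hf'2 : MemLp f' 2 μ := hf2.ae_eq hae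
    set c₀ : ℝ := ∫ x, f x ∂μ with hc0_def
    have hc0' : ∫ x, f' x ∂μ = c₀ := (integral_congr_ae hae).symm
    set V : ℝ := ∫ x, (f x - c₀)^2 ∂μ with hV_def
    have hVf' : ∫ x, (f' x - c₀)^2 ∂μ = V :=
      (integral_congr_ae (hae.mono fun x hx => by rw [hx])).symm
    have hsumnn : 0 ≤ ∑ k : Fin m, ∫ x, (f ((α (e k)).symm x) - f x)^2 ∂μ :=
      Finset.sum_nonneg fun k _ => integral_nonneg fun x => sq_nonneg _
    have hVpos : 0 < V :=
      lt_of_le_of_lt (mul_nonneg (by positivity) hsumnn) hflt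
    set s : ℝ := Real.sqrt V with hs_def
    have hs : 0 < s := Real.sqrt_pos.mpr hVpos
    have hs2 : s^2 = V := Real.sq_sqrt hVpos.le
    set h : X → ℝ := fun x => (1/s) * (f' x - c₀) with hh_def
    have hmeas : Measurable h := (hf'meas.sub measurable_const).const_mul (1/s)
    have hL2 : MemLp h 2 μ := (hf'2.sub (memLp_const c₀)).const_mul (1/s)
    have hintf' : Integrable f' μ := hf'2.integrable one_le_two
    have hmean : ∫ x, h x ∂μ = 0 := by
      rw [hh_def]
      rw [integral_const_mul, integral_sub hintf' (integrable_const _), hc0', integral_const]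
      simp
    have hnorm : ∫ x, h x ^ 2 ∂μ = 1 := by
      have e1 : ∀ x, h x ^ 2 = (f' x - c₀)^2 / V := by
        intro x
        rw [hh_def]
        simp only []
        rw [← hs2]
        field_simp
      rw [integral_congr_ae (ae_of_all _ e1), integral_div, hVf', div_self hVpos.ne']
    have hρ : ∑ k, ∫ x, (h (σ k x) - h x)^2 ∂μ ≤ 1/((m:ℝ)+1)^3 := by
      have e2 : ∀ k : Fin m, ∫ x, (h (σ k x) - h x)^2 ∂μ
          = (∫ x, (f ((α (e k)).symm x) - f x)^2 ∂μ)/V := by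
        intro k
        have hq : f ∘ (σ k) =ᵐ[μ] f' ∘ (σ k) :=
          (hσ k).quasiMeasurePreserving.ae_eq_comp hae
        have e3 : ∀ᵐ x ∂μ, (h (σ k x) - h x)^2 = (f ((α (e k)).symm x) - f x)^2 / V := by
          filter_upwards [hq, hae] with x h1 h2
          have h1' : f (σ k x) = f' (σ k x) := h1
          have e4 : h (σ k x) - h x = (1/s) * (f' (σ k x) - f' x) := by
            rw [hh_def]; ring
          rw [e4, show (α (e k)).symm x = σ k x from rfl, h1', h2, mul_pow, ← hs2]
          field_simp
        rw [integral_congr_ae e3, integral_div]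
      rw [Finset.sum_congr rfl (fun k _ => e2 k), ← Finset.sum_div,
        div_le_div_iff₀ hVpos (by positivity)]
      nlinarith
    obtain ⟨A, hAm, hApos, hAhalf, hAbd⟩ := keylemma m σ hσ hmeas hL2 hmean hnorm hρ
    refine ⟨A, hAm, hApos, hAhalf, fun k => ?_⟩
    rw [(α (e k)).image_eq_preimage_symm]
    exact hAbd k
  choose A hAmeas hApos hAhalf hAbd using main
  have hxle : ∀ m, (μ (A m)).toReal ≤ 1/2 := fun m =>
    (le_half_iff (measure_ne_top μ _)).mp (hAhalf m)
  have hxone : ∀ m, (μ (A m)).toReal ≤ 1 := fun m => by linarith [hxle m]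
  have h24 : Tendsto (fun m : ℕ => 24/((m:ℝ)+1)) atTop (nhds 0) := by
    have h1 := (tendsto_const_div_atTop_nhds_zero_nat (24:ℝ)).comp (tendsto_add_atTop_nat 1)
    have h2 : (fun m : ℕ => 24/((m:ℝ)+1)) = (fun n : ℕ => 24/(n:ℝ)) ∘ (fun m => m + 1) := by
      funext m
      simp only [Function.comp_apply]
      push_cast
      ring
    rw [h2]
    exact h1
  have hbound : ∀ g : Γ, ∀ᶠ m : ℕ in atTop,
      (μ (symmDiff (A m) (α g '' A m))).toReal ≤ 24/((m:ℝ)+1) := by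
    intro g
    obtain ⟨k, hk⟩ := he g
    filter_upwards [eventually_ge_atTop (k+1)] with m hm
    have hkm : k < m := hm
    have hb := hAbd m ⟨k, hkm⟩
    simp only [hk] at hb
    calc (μ (symmDiff (A m) (α g '' A m))).toReal
        ≤ 24/((m:ℝ)+1) * (μ (A m)).toReal := hb
      _ ≤ 24/((m:ℝ)+1) * 1 := by
          apply mul_le_mul_of_nonneg_left (hxone m) (by positivity)
      _ = 24/((m:ℝ)+1) := mul_one _
  have hsym0 : ∀ g : Γ, Tendsto
      (fun m => (μ (symmDiff (A m) (α g '' A m))).toReal) atTop (nhds 0) := by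
    intro g
    refine tendsto_of_tendsto_of_tendsto_of_le_of_le' tendsto_const_nhds h24
      (Eventually.of_forall fun m => ENNReal.toReal_nonneg) (hbound g)
  have hprod := hse A hAmeas hsym0
  have hx0 : Tendsto (fun m => (μ (A m)).toReal) atTop (nhds 0) := by
    have h2 : Tendsto (fun m => 2 * ((μ (A m)).toReal * (1 - (μ (A m)).toReal)))
        atTop (nhds 0) := by
      have := hprod.const_mul 2
      simpa using this
    refine tendsto_of_tendsto_of_tendsto_of_le_of_le' tendsto_const_nhds h2
      (Eventually.of_forall fun m => ENNReal.toReal_nonneg)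
      (Eventually.of_forall fun m => ?_)
    have h3 := hxle m
    have h4 : (0:ℝ) ≤ (μ (A m)).toReal := ENNReal.toReal_nonneg
    nlinarith
  refine ⟨A, hAmeas, hApos, hx0, fun g => ?_⟩
  have hxpos : ∀ m, 0 < (μ (A m)).toReal := fun m =>
    ENNReal.toReal_pos (hApos m).ne' (measure_ne_top μ _)
  have hratio : ∀ᶠ m : ℕ in atTop,
      (μ (symmDiff (A m) (α g '' A m))).toReal / (μ (A m)).toReal ≤ 24/((m:ℝ)+1) := by
    obtain ⟨k, hk⟩ := he g
    filter_upwards [eventually_ge_atTop (k+1)] with m hm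
    have hkm : k < m := hm
    have hb := hAbd m ⟨k, hkm⟩
    simp only [hk] at hb
    rw [div_le_iff₀ (hxpos m)]
    exact hb
  refine tendsto_of_tendsto_of_tendsto_of_le_of_le' tendsto_const_nhds h24
    (Eventually.of_forall fun m => div_nonneg ENNReal.toReal_nonneg ENNReal.toReal_nonneg)
    hratio
end

section
/- Let G = ℤ/2 ∗ ℤ/3 be the free product of cyclic groups of orders 2 and 3. Then for every g ∈ G with g ≠ 1, the conjugacy class {γgγ⁻¹ : γ ∈ G} is infinite. -/
open Monoid
open Monoid Matrix UpperHalfPlane Pointwise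
noncomputable section
namespace Stmt8
abbrev SL2 := Matrix.SpecialLinearGroup (Fin 2) ℝ
def Smat : SL2 := ⟨!![0,-1;1,0], by simp [Matrix.det_fin_two_of]⟩
def Bmat : SL2 := ⟨!![0,1;-1,1], by simp [Matrix.det_fin_two_of]⟩
def π : SL2 →* Equiv.Perm ℍ := MulAction.toPermHom SL2 ℍ

lemma coe_sl_smul (g : SL2) (z : ℍ) :
    ((g • z : ℍ) : ℂ) = (g 0 0 * z + g 0 1) / (g 1 0 * z + g 1 1) := by
  rw [UpperHalfPlane.specialLinearGroup_apply]; simp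

lemma det_entries (N : SL2) : N 0 0 * N 1 1 - N 0 1 * N 1 0 = 1 := by
  have := N.2; rwa [Matrix.det_fin_two] at this

lemma pi_eq_one (N : SL2) (h10 : N 1 0 = 0) (h01 : N 0 1 = 0) (hd : N 0 0 = N 1 1) :
    π N = 1 := by
  have hdet := det_entries N
  rw [h10, h01, ← hd] at hdet
  have hp : N 0 0 ≠ 0 := by intro h0; rw [h0] at hdet; simp at hdet
  ext z
  show ((N • z : ℍ) : ℂ) = (z : ℂ)
  rw [coe_sl_smul, h10, h01, hd]
  push_cast
  rw [hd] at hp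
  have : ((N 1 1 : ℝ) : ℂ) ≠ 0 := by exact_mod_cast hp
  simp only [zero_mul, add_zero, zero_add]; exact mul_div_cancel_left₀ _ this

lemma triv_entries (N : SL2) (h : ∀ z : ℍ, N • z = z) :
    N 1 0 = 0 ∧ N 0 1 = 0 ∧ N 0 0 = N 1 1 := by
  have hdet := det_entries N
  have hd : ∀ z : ℍ, ((N 1 0 : ℂ) * z + N 1 1) ≠ 0 := by
    intro z
    have hne : ![N 1 0, N 1 1] ≠ 0 := by
      intro h0
      have h1 : N 1 0 = 0 := congrFun h0 0
      have h2 : N 1 1 = 0 := congrFun h0 1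
      rw [h1, h2] at hdet; simp at hdet
    simpa using UpperHalfPlane.linear_ne_zero (cd := ![N 1 0, N 1 1]) z hne
  have key : ∀ z : ℍ, (N 0 0 : ℂ) * z + N 0 1 = (z:ℂ) * ((N 1 0 : ℂ) * z + N 1 1) := by
    intro z
    have h1 := congrArg (UpperHalfPlane.coe) (h z)
    rw [coe_sl_smul] at h1
    rw [div_eq_iff (hd z)] at h1
    exact h1
  have e1 := key ⟨Complex.I, by simp⟩
  have e2 := key ⟨2 * Complex.I, by simp⟩
  simp only [UpperHalfPlane.coe_mk] at e1 e2
  rw [Complex.ext_iff] at e1 e2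
  obtain ⟨e1r, e1i⟩ := e1
  obtain ⟨e2r, e2i⟩ := e2
  simp [Complex.mul_re, Complex.mul_im] at e1r e1i e2r e2i
  refine ⟨by linarith, by linarith, by linarith⟩

lemma commute_matrix {M K : SL2} (h : π M * π K = π K * π M) :
    ∃ ε : ℝ, ε * ε = 1 ∧
      (M : Matrix (Fin 2) (Fin 2) ℝ) * K = ε • ((K : Matrix (Fin 2) (Fin 2) ℝ) * M) := by
  set W : SL2 := (K * M)⁻¹ * (M * K) with hW
  have hw : ∀ z : ℍ, W • z = z := by
    intro z
    have h2 : π (M * K) = π (K * M) := by rw [_root_.map_mul, _root_.map_mul, h]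
    have h1 : (M * K) • z = (K * M) • z := Equiv.ext_iff.1 h2 z
    rw [hW, mul_smul, h1, inv_smul_smul]
  obtain ⟨h10, h01, hdiag⟩ := triv_entries W hw
  have hdet := det_entries W
  refine ⟨W 0 0, by rw [hdiag] at hdet ⊢; rw [h01, h10] at hdet; linarith, ?_⟩
  have hWmat : (W : Matrix (Fin 2) (Fin 2) ℝ) = (W 0 0 : ℝ) • (1 : Matrix (Fin 2) (Fin 2) ℝ) := by
    ext i j
    fin_cases i <;> fin_cases j <;>
      simp [Matrix.one_apply, h10, h01, hdiag.symm]
  have hKM : (K * M) * W = M * K := by rw [hW]; group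
  have hcoe := congrArg (fun x : SL2 => (x : Matrix (Fin 2) (Fin 2) ℝ)) hKM
  simp only [Matrix.SpecialLinearGroup.coe_mul] at hcoe
  rw [hWmat] at hcoe
  rw [← hcoe, mul_smul_comm, mul_one]

def Cmat : SL2 := Smat * Bmat
def Dmat : SL2 := Bmat * Smat

lemma Cmat_coe : (Cmat : Matrix (Fin 2) (Fin 2) ℝ) = !![1,-1;0,1] := by
  show (Smat : Matrix (Fin 2) (Fin 2) ℝ) * Bmat = _
  show (!![0,-1;1,0] : Matrix (Fin 2) (Fin 2) ℝ) * !![0,1;-1,1] = _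
  rw [Matrix.mul_fin_two]; norm_num

lemma Dmat_coe : (Dmat : Matrix (Fin 2) (Fin 2) ℝ) = !![1,0;1,1] := by
  show (Bmat : Matrix (Fin 2) (Fin 2) ℝ) * Smat = _
  show (!![0,1;-1,1] : Matrix (Fin 2) (Fin 2) ℝ) * !![0,-1;1,0] = _
  rw [Matrix.mul_fin_two]; norm_num

lemma Cmat_pow (k : ℕ) : ((Cmat ^ k : SL2) : Matrix (Fin 2) (Fin 2) ℝ) = !![1,-(k:ℝ);0,1] := by
  induction k with
  | zero => simp [Matrix.one_fin_two]
  | succ n ih =>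
    rw [pow_succ, Matrix.SpecialLinearGroup.coe_mul, ih, Cmat_coe, Matrix.mul_fin_two]
    push_cast
    norm_num

lemma Dmat_pow (k : ℕ) : ((Dmat ^ k : SL2) : Matrix (Fin 2) (Fin 2) ℝ) = !![1,0;(k:ℝ),1] := by
  induction k with
  | zero => simp [Matrix.one_fin_two]
  | succ n ih =>
    rw [pow_succ, Matrix.SpecialLinearGroup.coe_mul, ih, Dmat_coe, Matrix.mul_fin_two]
    push_cast
    norm_num

lemma eps_cases {ε : ℝ} (h : ε * ε = 1) : ε = 1 ∨ ε = -1 := by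
  have : (ε - 1) * (ε + 1) = 0 := by ring_nf; linarith
  rcases mul_eq_zero.1 this with h1 | h1
  · left; linarith
  · right; linarith

lemma upper_commute (M : SL2) {k : ℕ} (hk : 1 ≤ k)
    (h : π M * π (Cmat ^ k) = π (Cmat ^ k) * π M) :
    M 1 0 = 0 ∧ M 0 0 = M 1 1 := by
  obtain ⟨ε, hε, heq⟩ := commute_matrix h
  rw [Cmat_pow] at heq
  have hκ : (0:ℝ) < (k:ℝ) := by exact_mod_cast hk
  have e00 := congrFun (congrFun heq 0) 0
  have e01 := congrFun (congrFun heq 0) 1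
  have e10 := congrFun (congrFun heq 1) 0
  have e11 := congrFun (congrFun heq 1) 1
  simp [Matrix.mul_apply, Fin.sum_univ_two, Matrix.smul_apply, Matrix.vecMul, dotProduct, Matrix.vecHead, Matrix.vecTail] at e00 e01 e10 e11
  have hdet := det_entries M
  rcases eps_cases hε with rfl | rfl
  · constructor
    · nlinarith
    · nlinarith
  · exfalso
    have hr : M 1 0 = 0 := by linarith
    have hs : M 1 1 = 0 := by nlinarith
    have hp : M 0 0 = 0 := by nlinarith
    rw [hr, hs, hp] at hdet
    simp at hdet

lemma lower_commute (M : SL2) {k : ℕ} (hk : 1 ≤ k)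
    (h : π M * π (Dmat ^ k) = π (Dmat ^ k) * π M) :
    M 0 1 = 0 ∧ M 0 0 = M 1 1 := by
  obtain ⟨ε, hε, heq⟩ := commute_matrix h
  rw [Dmat_pow] at heq
  have hκ : (0:ℝ) < (k:ℝ) := by exact_mod_cast hk
  have e00 := congrFun (congrFun heq 0) 0
  have e01 := congrFun (congrFun heq 0) 1
  have e10 := congrFun (congrFun heq 1) 0
  have e11 := congrFun (congrFun heq 1) 1
  simp [Matrix.mul_apply, Fin.sum_univ_two, Matrix.smul_apply, Matrix.vecMul, dotProduct, Matrix.vecHead, Matrix.vecTail] at e00 e01 e10 e11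
  have hdet := det_entries M
  rcases eps_cases hε with rfl | rfl
  · constructor
    · nlinarith
    · nlinarith
  · exfalso
    have hq : M 0 1 = 0 := by linarith
    have hp : M 0 0 = 0 := by nlinarith
    have hs : M 1 1 = 0 := by nlinarith
    rw [hq, hp, hs] at hdet
    simp at hdet

lemma smat_re {z : ℍ} (hz : 0 < z.re) : (Smat • z).re < 0 := by
  have h : ((Smat • z : ℍ) : ℂ) = -(z:ℂ)⁻¹ := by
    rw [coe_sl_smul]; simp [Smat]; ring
  have h' : (Smat • z).re = -((z:ℂ)⁻¹.re) := by
    rw [← UpperHalfPlane.coe_re, h, Complex.neg_re]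
  rw [h', Complex.inv_re]
  have h1 : 0 < Complex.normSq (z:ℂ) := z.normSq_pos
  have h2 : 0 < (z:ℂ).re := by rwa [UpperHalfPlane.coe_re]
  have := div_pos h2 h1
  linarith

lemma bmat_re {z : ℍ} (hz : z.re < 0) : 0 < (Bmat • z).re := by
  have hne : (1 - (z:ℂ)) ≠ 0 := by
    intro h0
    have h1 := congrArg Complex.im h0
    simp at h1
    exact z.im_ne_zero h1
  have h : ((Bmat • z : ℍ) : ℂ) = (1 - (z:ℂ))⁻¹ := by
    rw [coe_sl_smul]; simp [Bmat]
    ring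
  have h' : (Bmat • z).re = ((1 - (z:ℂ))⁻¹).re := by
    rw [← UpperHalfPlane.coe_re, h]
  rw [h', Complex.inv_re]
  have h1 : 0 < Complex.normSq (1 - (z:ℂ)) := Complex.normSq_pos.2 hne
  have h2 : (1 - (z:ℂ)).re = 1 - z.re := by simp [UpperHalfPlane.coe_re]
  rw [h2]
  have h3 : 0 < 1 - z.re := by linarith
  positivity

lemma bmat2_re {z : ℍ} (hz : z.re < 0) : 0 < ((Bmat * Bmat) • z).re := by
  have h : (((Bmat * Bmat) • z : ℍ) : ℂ) = 1 - (z:ℂ)⁻¹ := by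
    rw [coe_sl_smul]
    have e : (Bmat * Bmat : SL2) = ⟨!![-1,1;-1,0], by simp [Matrix.det_fin_two_of]⟩ := by
      ext i j
      rw [Matrix.SpecialLinearGroup.coe_mul]
      fin_cases i <;> fin_cases j <;>
        simp [Bmat, Matrix.SpecialLinearGroup.coe_mul, Matrix.mul_apply, Fin.sum_univ_two]
    rw [e]
    simp
    field_simp [z.ne_zero]
    ring
  have h' : ((Bmat * Bmat) • z).re = 1 - (z:ℂ)⁻¹.re := by
    rw [← UpperHalfPlane.coe_re, h]; simp
  rw [h', Complex.inv_re]
  have h1 : 0 < Complex.normSq (z:ℂ) := z.normSq_pos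
  have h2 : (z:ℂ).re < 0 := by rw [UpperHalfPlane.coe_re]; exact hz
  have h3 : (z:ℂ).re / Complex.normSq (z:ℂ) < 0 := div_neg_of_neg_of_pos h2 h1
  linarith


abbrev M2 := Multiplicative (ZMod 2)
abbrev M3 := Multiplicative (ZMod 3)

def homOfOrder {G : Type*} [Group G] {n : ℕ} [NeZero n] (g : G) (hg : g ^ n = 1) :
    Multiplicative (ZMod n) →* G where
  toFun x := g ^ (Multiplicative.toAdd x).val
  map_one' := by simp
  map_mul' x y := by
    have key : ∀ m : ℕ, g ^ (m % n) = g ^ m := by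
      intro m
      conv_rhs => rw [← Nat.div_add_mod m n]
      rw [pow_add, pow_mul, hg, one_pow, one_mul]
    show g ^ (Multiplicative.toAdd (x * y)).val = _
    rw [toAdd_mul, ZMod.val_add, key, pow_add]

lemma smat_sq : π Smat ^ 2 = 1 := by
  rw [← _root_.map_pow]
  have h2 : ((Smat ^ 2 : SL2) : Matrix (Fin 2) (Fin 2) ℝ) = !![-1,0;0,-1] := by
    rw [sq, Matrix.SpecialLinearGroup.coe_mul,
      show (Smat : Matrix (Fin 2) (Fin 2) ℝ) = !![0,-1;1,0] from rfl, Matrix.mul_fin_two]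
    norm_num
  apply pi_eq_one <;> rw [h2] <;> norm_num

lemma bmat_cube : π Bmat ^ 3 = 1 := by
  rw [← _root_.map_pow]
  have h3 : ((Bmat ^ 3 : SL2) : Matrix (Fin 2) (Fin 2) ℝ) = !![-1,0;0,-1] := by
    rw [pow_succ, sq, Matrix.SpecialLinearGroup.coe_mul, Matrix.SpecialLinearGroup.coe_mul,
      show (Bmat : Matrix (Fin 2) (Fin 2) ℝ) = !![0,1;-1,1] from rfl,
      Matrix.mul_fin_two, Matrix.mul_fin_two]
    norm_num
  apply pi_eq_one <;> rw [h3] <;> norm_num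

def φ₂ : M2 →* Equiv.Perm ℍ := homOfOrder (π Smat) smat_sq
def φ₃ : M3 →* Equiv.Perm ℍ := homOfOrder (π Bmat) bmat_cube

lemma φ₂_apply (x : ZMod 2) : φ₂ (Multiplicative.ofAdd x) = π Smat ^ x.val := rfl
lemma φ₃_apply (x : ZMod 3) : φ₃ (Multiplicative.ofAdd x) = π Bmat ^ x.val := rfl

abbrev Hfam : Bool → Type := fun b => Bool.rec M2 M3 b

instance instHfamGroup : ∀ b : Bool, Group (Hfam b) := fun b =>
  Bool.rec (inferInstance : Group M2) (inferInstance : Group M3) b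

def fdef : ∀ b : Bool, Hfam b →* Equiv.Perm ℍ := fun b => Bool.rec φ₂ φ₃ b

def Xpp : Bool → Set ℍ := fun b => cond b {z : ℍ | 0 < z.re} {z : ℍ | z.re < 0}

lemma zmod2_cases : ∀ x : ZMod 2, x = 0 ∨ x = 1 := by decide
lemma zmod3_cases : ∀ x : ZMod 3, x = 0 ∨ x = 1 ∨ x = 2 := by decide

lemma pp_false : ∀ h : M2, h ≠ 1 → (φ₂ h) • Xpp true ⊆ Xpp false := by
  intro h hne
  have hx : Multiplicative.toAdd h = 1 := by
    rcases zmod2_cases (Multiplicative.toAdd h) with h0 | h1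
    · exact absurd (by simpa using congrArg Multiplicative.ofAdd h0) hne
    · exact h1
  have hval : φ₂ h = π Smat := by
    have hh : h = Multiplicative.ofAdd (1 : ZMod 2) := by
      rw [← hx]; simp
    rw [hh, φ₂_apply, ZMod.val_one, pow_one]
  rw [hval]
  rintro z ⟨w, hw, rfl⟩
  show ((π Smat) w) ∈ Xpp false
  have hr : (π Smat) w = Smat • w := rfl
  rw [hr]
  simp only [Xpp, Set.mem_setOf_eq, cond] at hw ⊢
  exact smat_re hw

lemma pp_true : ∀ h : M3, h ≠ 1 → (φ₃ h) • Xpp false ⊆ Xpp true := by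
  intro h hne
  have hx : Multiplicative.toAdd h = 1 ∨ Multiplicative.toAdd h = 2 := by
    rcases zmod3_cases (Multiplicative.toAdd h) with h0 | h1
    · exact absurd (by simpa using congrArg Multiplicative.ofAdd h0) hne
    · exact h1
  rintro z ⟨w, hw, rfl⟩
  simp only [Xpp, Set.mem_setOf_eq, cond] at hw ⊢
  rcases hx with h1 | h2
  · have hval : φ₃ h = π Bmat := by
      have hh : h = Multiplicative.ofAdd (1 : ZMod 3) := by rw [← h1]; simp
      rw [hh, φ₃_apply, ZMod.val_one, pow_one]
    rw [hval]
    show 0 < ((π Bmat) w).re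
    have hr : (π Bmat) w = Bmat • w := rfl
    rw [hr]
    exact bmat_re hw
  · have hval : φ₃ h = π Bmat * π Bmat := by
      have hh : h = Multiplicative.ofAdd (2 : ZMod 3) := by rw [← h2]; simp
      rw [hh, φ₃_apply, show (2 : ZMod 3).val = 2 from rfl, sq]
    rw [hval]
    show 0 < ((π Bmat * π Bmat) w).re
    have hr : (π Bmat * π Bmat) w = (Bmat * Bmat) • w := by
      rw [← _root_.map_mul]; rfl
    rw [hr]
    exact bmat2_re hw

lemma liftf_injective : Function.Injective (CoprodI.lift fdef) := by
  apply CoprodI.lift_injective_of_ping_pong fdef _ Xpp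
  · intro b
    cases b
    · exact ⟨⟨-1 + Complex.I, by norm_num⟩, by
        show (-1 + Complex.I).re < 0
        norm_num⟩
    · exact ⟨⟨1 + Complex.I, by norm_num⟩, by
        show 0 < (1 + Complex.I).re
        norm_num⟩
  · intro i j hij
    have key : Disjoint (Xpp false) (Xpp true) := by
      rw [Set.disjoint_left]
      intro z hz hz'
      simp only [Xpp, Set.mem_setOf_eq, cond] at hz hz'
      linarith
    cases i <;> cases j
    · simp at hij
    · exact key
    · exact key.symm
    · simp at hij
  · intro i j hij
    cases i <;> cases j
    · simp at hij
    · exact pp_false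
    · exact pp_true
    · simp at hij
  · right
    exact ⟨true, by simp [Cardinal.mk_fintype, Hfam]⟩

abbrev GG := Coprod M2 M3

def e : GG →* CoprodI Hfam :=
  Coprod.lift (CoprodI.of (M := Hfam) (i := false)) (CoprodI.of (M := Hfam) (i := true))

def e' : CoprodI Hfam →* GG := CoprodI.lift (fun b => Bool.rec Coprod.inl Coprod.inr b)

lemma e'_comp_e : (e'.comp e) = MonoidHom.id GG := by
  apply Coprod.hom_ext
  · ext x
    simp [e, e', Coprod.lift_apply_inl, CoprodI.lift_of]
  · ext x
    simp [e, e', Coprod.lift_apply_inr, CoprodI.lift_of]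

lemma e_injective : Function.Injective e := by
  have h : Function.LeftInverse e' e := fun x => by
    have := congrArg (fun f : GG →* GG => f x) e'_comp_e
    simpa using this
  exact h.injective

def ρ : GG →* Equiv.Perm ℍ := (CoprodI.lift fdef).comp e

lemma ρ_injective : Function.Injective ρ := liftf_injective.comp e_injective

lemma ρ_inl (m : M2) : ρ (Coprod.inl m) = φ₂ m := by
  simp [ρ, e, Coprod.lift_apply_inl]
  rfl

lemma ρ_inr (m : M3) : ρ (Coprod.inr m) = φ₃ m := by
  simp [ρ, e, Coprod.lift_apply_inr]
  rfl

lemma exists_matrix (x : GG) : ∃ N : SL2, ρ x = π N := by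
  induction x using Coprod.induction_on with
  | inl m =>
    rw [ρ_inl]
    rcases zmod2_cases (Multiplicative.toAdd m) with h0 | h1
    · refine ⟨1, ?_⟩
      have : m = 1 := by
        have := congrArg Multiplicative.ofAdd h0
        simpa using this
      rw [this]; simp
    · refine ⟨Smat, ?_⟩
      have : m = Multiplicative.ofAdd (1 : ZMod 2) := by rw [← h1]; simp
      rw [this, φ₂_apply, ZMod.val_one, pow_one]
  | inr m =>
    rw [ρ_inr]
    rcases zmod3_cases (Multiplicative.toAdd m) with h0 | h1 | h2
    · refine ⟨1, ?_⟩
      have : m = 1 := by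
        have := congrArg Multiplicative.ofAdd h0
        simpa using this
      rw [this]; simp
    · refine ⟨Bmat, ?_⟩
      have : m = Multiplicative.ofAdd (1 : ZMod 3) := by rw [← h1]; simp
      rw [this, φ₃_apply, ZMod.val_one, pow_one]
    · refine ⟨Bmat * Bmat, ?_⟩
      have : m = Multiplicative.ofAdd (2 : ZMod 3) := by rw [← h2]; simp
      rw [this, φ₃_apply, show (2 : ZMod 3).val = 2 from rfl, sq, _root_.map_mul]
  | mul x y hx hy =>
    obtain ⟨N1, h1⟩ := hx
    obtain ⟨N2, h2⟩ := hy
    exact ⟨N1 * N2, by rw [_root_.map_mul, h1, h2, _root_.map_mul]⟩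

def cel : GG := Coprod.inl (Multiplicative.ofAdd (1 : ZMod 2)) *
  Coprod.inr (Multiplicative.ofAdd (1 : ZMod 3))
def del : GG := Coprod.inr (Multiplicative.ofAdd (1 : ZMod 3)) *
  Coprod.inl (Multiplicative.ofAdd (1 : ZMod 2))

lemma ρ_cel : ρ cel = π Cmat := by
  rw [cel, _root_.map_mul, ρ_inl, ρ_inr, φ₂_apply, φ₃_apply, ZMod.val_one, ZMod.val_one,
    pow_one, pow_one, Cmat, _root_.map_mul]

lemma ρ_del : ρ del = π Dmat := by
  rw [del, _root_.map_mul, ρ_inl, ρ_inr, φ₂_apply, φ₃_apply, ZMod.val_one, ZMod.val_one,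
    pow_one, pow_one, Dmat, _root_.map_mul]

end Stmt8
end

open Stmt8

/-- In the free product `ℤ/2 ∗ ℤ/3`, every nontrivial conjugacy class is infinite,
i.e. the group is ICC. -/
theorem stmt8 (g : Coprod (Multiplicative (ZMod 2)) (Multiplicative (ZMod 3))) (hg : g ≠ 1) :
    {h | ∃ γ : Coprod (Multiplicative (ZMod 2)) (Multiplicative (ZMod 3)),
        γ * g * γ⁻¹ = h}.Infinite := by
  by_contra hfin
  rw [Set.not_infinite] at hfin
  have key : ∀ x : GG, ∃ k : ℕ, 1 ≤ k ∧ g * x ^ k = x ^ k * g := by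
    intro x
    haveI := hfin.to_subtype
    obtain ⟨m, n, hmn, he⟩ := Finite.exists_ne_map_eq_of_infinite
      (fun j : ℕ => (⟨x ^ j * g * (x ^ j)⁻¹, ⟨x ^ j, rfl⟩⟩ :
        {h | ∃ γ : Coprod (Multiplicative (ZMod 2)) (Multiplicative (ZMod 3)),
          γ * g * γ⁻¹ = h}))
    have hval : x ^ m * g * (x ^ m)⁻¹ = x ^ n * g * (x ^ n)⁻¹ := congrArg Subtype.val he
    have main : ∀ m n : ℕ, m < n → x ^ m * g * (x ^ m)⁻¹ = x ^ n * g * (x ^ n)⁻¹ →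
        ∃ k : ℕ, 1 ≤ k ∧ g * x ^ k = x ^ k * g := by
      clear hval hmn he m n
      intro m n hlt hval
      obtain ⟨k, hk, hk1⟩ : ∃ k : ℕ, n = m + k ∧ 1 ≤ k := ⟨n - m, by omega, by omega⟩
      refine ⟨k, hk1, ?_⟩
      rw [hk, pow_add, _root_.mul_inv_rev] at hval
      have h6 := congrArg (fun y => (x ^ m)⁻¹ * y * x ^ m) hval
      simp only [mul_assoc, inv_mul_cancel_left] at h6
      rw [inv_mul_cancel, mul_one] at h6
      -- h6 : g * (x^m)⁻¹ * x^m = x^k * (g * ((x^k)⁻¹ * ((x^m)⁻¹ * x^m)))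
      have h7 : g = x ^ k * (g * (x ^ k)⁻¹) := by
        simpa [mul_assoc] using h6
      calc g * x ^ k = (x ^ k * (g * (x ^ k)⁻¹)) * x ^ k := by rw [← h7]
        _ = x ^ k * g := by simp [mul_assoc]
    rcases hmn.lt_or_gt with hlt | hlt
    · exact main m n hlt hval
    · exact main n m hlt hval.symm
  obtain ⟨k, hk1, hck⟩ := key cel
  obtain ⟨l, hl1, hdl⟩ := key del
  obtain ⟨N, hN⟩ := exists_matrix g
  have hC : π N * π (Cmat ^ k) = π (Cmat ^ k) * π N := by
    have h1 := congrArg ρ hck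
    rw [_root_.map_mul, _root_.map_mul, _root_.map_pow, ρ_cel, hN, ← _root_.map_pow] at h1
    exact h1
  have hD : π N * π (Dmat ^ l) = π (Dmat ^ l) * π N := by
    have h1 := congrArg ρ hdl
    rw [_root_.map_mul, _root_.map_mul, _root_.map_pow, ρ_del, hN, ← _root_.map_pow] at h1
    exact h1
  obtain ⟨h10, hdg⟩ := upper_commute N hk1 hC
  obtain ⟨h01, _⟩ := lower_commute N hl1 hD
  have hπ : π N = 1 := pi_eq_one N h10 h01 hdg
  exact hg (ρ_injective (by rw [hN, hπ, _root_.map_one]))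
end

section
/- Let Γ = ℤ/2 ∗ ℤ/3, Λ = the restricted direct sum ⨁_{n∈ℕ} Γ, H = ⨁_{n∈ℕ} ℤ/2 viewed as a subgroup of Λ via the ℤ/2 factors, and I = Λ/H the coset space with left translation action of Λ. Then for every λ ∈ Λ with λ ≠ 1, there are infinitely many i ∈ I such that λ·i ≠ i. -/
/-- The free product `ℤ/2 ∗ ℤ/3`. -/
abbrev GG : Type := Monoid.Coprod (Multiplicative (ZMod 2)) (Multiplicative (ZMod 3))

/-- `Λ = ⨁_{n ∈ ℕ} (ℤ/2 ∗ ℤ/3)`, the restricted direct sum, realized as the subgroup of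
the full direct product consisting of finitely supported functions. -/
def Lam : Subgroup (ℕ → GG) where
  carrier := {f | {n | f n ≠ 1}.Finite}
  one_mem' := by simp
  mul_mem' := by
    intro a b ha hb
    refine (ha.union hb).subset ?_
    intro n hn
    by_contra h
    simp only [Set.mem_union, Set.mem_setOf_eq, not_or, ne_eq, not_not] at h
    exact hn (by simp [Pi.mul_apply, h.1, h.2])
  inv_mem' := by
    intro a ha
    refine ha.subset ?_
    intro n hn
    simp only [Set.mem_setOf_eq, Pi.inv_apply, ne_eq, inv_eq_one] at hn ⊢
    exact hn

/-- `H = ⨁_{n ∈ ℕ} ℤ/2`, viewed as the subgroup of `Λ` of those elements all of whose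
coordinates lie in the canonical copy of `ℤ/2` inside `ℤ/2 ∗ ℤ/3`. -/
def Hsub : Subgroup Lam where
  carrier := {f | ∀ n, (f : ℕ → GG) n ∈
    (Monoid.Coprod.inl : Multiplicative (ZMod 2) →* GG).range}
  one_mem' := by
    intro n
    exact ⟨1, by simp⟩
  mul_mem' := by
    intro a b ha hb n
    exact mul_mem (ha n) (hb n)
  inv_mem' := by
    intro a ha n
    exact inv_mem (ha n)

namespace Stmt9Aux

abbrev M2 : Type := Matrix (Fin 2) (Fin 2) ℤ

def A : M2 := !![1, 0; 0, -1]
def B : M2 := !![0, -1; 1, -1]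
def M : M2 := B * A

def f2 : Multiplicative (ZMod 2) →* M2 where
  toFun x := A ^ (Multiplicative.toAdd x).val
  map_one' := by decide
  map_mul' := by decide

def f3 : Multiplicative (ZMod 3) →* M2 where
  toFun x := B ^ (Multiplicative.toAdd x).val
  map_one' := by decide
  map_mul' := by decide

/-- The homomorphism `ℤ/2 ∗ ℤ/3 → M₂(ℤ)` sending the generators to `A` and `B`. -/
def φ : GG →* M2 := Monoid.Coprod.lift f2 f3

def a : GG := Monoid.Coprod.inl (Multiplicative.ofAdd (1 : ZMod 2))
def b : GG := Monoid.Coprod.inr (Multiplicative.ofAdd (1 : ZMod 3))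

lemma phi_a : φ a = A := by
  simp only [φ, a, Monoid.Coprod.lift_apply_inl, f2, MonoidHom.coe_mk, OneHom.coe_mk]
  decide

lemma phi_ba : φ (b * a) = M := by
  rw [map_mul, phi_a]
  simp only [φ, b, Monoid.Coprod.lift_apply_inr, f3, MonoidHom.coe_mk, OneHom.coe_mk, M]
  congr 1
  decide

lemma M00 : M 0 0 = 0 := by decide
lemma M01 : M 0 1 = 1 := by decide
lemma M10 : M 1 0 = 1 := by decide
lemma M11 : M 1 1 = 1 := by decide

lemma Mpos : ∀ k : ℕ, 0 ≤ (M ^ (k + 1)) 0 0 ∧ 1 ≤ (M ^ (k + 1)) 0 1 ∧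
    1 ≤ (M ^ (k + 1)) 1 0 ∧ 1 ≤ (M ^ (k + 1)) 1 1 := by
  intro k
  induction k with
  | zero => rw [pow_one]; rw [M00, M01, M10, M11]; norm_num
  | succ n ih =>
    obtain ⟨h1, h2, h3, h4⟩ := ih
    rw [pow_succ]
    refine ⟨?_, ?_, ?_, ?_⟩ <;>
      simp only [Matrix.mul_apply, Fin.sum_univ_two, M00, M01, M10, M11] <;> nlinarith

lemma phiK {w : GG} (hw : w ∈ (Monoid.Coprod.inl : Multiplicative (ZMod 2) →* GG).range) :
    (φ w) 0 0 = 1 ∧ (φ w) 0 1 = 0 ∧ (φ w) 1 0 = 0 := by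
  obtain ⟨x, rfl⟩ := hw
  simp only [φ, Monoid.Coprod.lift_apply_inl, f2, MonoidHom.coe_mk, OneHom.coe_mk]
  revert x; decide

/-- Positive powers of `b * a` are not in the copy of `ℤ/2`. -/
lemma pow_not_mem (d : ℕ) :
    (b * a) ^ (d + 1) ∉ (Monoid.Coprod.inl : Multiplicative (ZMod 2) →* GG).range := by
  intro h
  obtain ⟨-, -, h3⟩ := phiK h
  rw [map_pow, phi_ba] at h3
  have := (Mpos d).2.2.1
  omega

/-- Conjugates of `a` by positive powers of `b * a` are not in the copy of `ℤ/2`. -/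
lemma conj_not_mem (k : ℕ) :
    ((b * a) ^ (k + 1))⁻¹ * a * (b * a) ^ (k + 1) ∉
      (Monoid.Coprod.inl : Multiplicative (ZMod 2) →* GG).range := by
  intro h
  obtain ⟨h1, h2, h3⟩ := phiK h
  have key : φ a * φ ((b * a) ^ (k + 1)) =
      φ ((b * a) ^ (k + 1)) * φ (((b * a) ^ (k + 1))⁻¹ * a * (b * a) ^ (k + 1)) := by
    rw [← map_mul, ← map_mul]
    congr 1
    group
  have e : (φ a * φ ((b * a) ^ (k + 1))) 1 0 =
      (φ ((b * a) ^ (k + 1)) * φ (((b * a) ^ (k + 1))⁻¹ * a * (b * a) ^ (k + 1))) 1 0 := by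
    rw [key]
  rw [phi_a, map_pow, phi_ba] at e
  simp only [Matrix.mul_apply, Fin.sum_univ_two, h1, h2, h3] at e
  have hA10 : A 1 0 = 0 := by decide
  have hA11 : A 1 1 = -1 := by decide
  rw [hA10, hA11] at e
  have := (Mpos k).2.2.1
  have := (Mpos k).2.2.2
  nlinarith

/-- Products `((b*a)^(j+1))⁻¹ * (b*a)^(k+1)` for `j ≠ k` are not in the copy of `ℤ/2`. -/
lemma pow_pair_not_mem {j k : ℕ} (hjk : j ≠ k) :
    ((b * a) ^ (j + 1))⁻¹ * (b * a) ^ (k + 1) ∉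
      (Monoid.Coprod.inl : Multiplicative (ZMod 2) →* GG).range := by
  intro h
  rcases lt_or_gt_of_ne hjk with hlt | hlt
  · apply pow_not_mem (k - j - 1)
    have hk : (b * a) ^ (k + 1) = (b * a) ^ (j + 1) * (b * a) ^ (k - j - 1 + 1) := by
      rw [← pow_add]; congr 1; omega
    rwa [hk, inv_mul_cancel_left] at h
  · apply pow_not_mem (j - k - 1)
    have h' := inv_mem h
    rw [mul_inv_rev, inv_inv] at h'
    have hj : (b * a) ^ (j + 1) = (b * a) ^ (k + 1) * (b * a) ^ (j - k - 1 + 1) := by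
      rw [← pow_add]; congr 1; omega
    rwa [hj, inv_mul_cancel_left] at h'

/-- The element of `Λ` supported at `m` with value `(b*a)^(k+1)` there. -/
def xel (m k : ℕ) : Lam :=
  ⟨fun n => if n = m then (b * a) ^ (k + 1) else 1, by
    apply Set.Finite.subset (Set.finite_singleton m)
    intro n hn
    simp only [Set.mem_setOf_eq] at hn
    by_contra hne
    simp only [Set.mem_singleton_iff] at hne
    exact hn (if_neg hne)⟩

lemma xel_apply (m k n : ℕ) :
    (xel m k : ℕ → GG) n = if n = m then (b * a) ^ (k + 1) else 1 := rfl

lemma mem_Hsub_iff {w : Lam} : w ∈ Hsub ↔ ∀ n, (w : ℕ → GG) n ∈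
    (Monoid.Coprod.inl : Multiplicative (ZMod 2) →* GG).range := Iff.rfl

lemma xel_inj (m : ℕ) :
    Function.Injective fun k => (QuotientGroup.mk (xel m k) : Lam ⧸ Hsub) := by
  intro j k h
  by_contra hjk
  rw [QuotientGroup.eq] at h
  have hm := mem_Hsub_iff.mp h m
  have hval : (((xel m j)⁻¹ * xel m k : Lam) : ℕ → GG) m =
      ((b * a) ^ (j + 1))⁻¹ * (b * a) ^ (k + 1) := by
    simp [xel_apply]
  rw [hval] at hm
  exact pow_pair_not_mem hjk hm

lemma moved {l x : Lam} {n : ℕ}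
    (hn : ((x : ℕ → GG) n)⁻¹ * ((l : ℕ → GG) n) * (x : ℕ → GG) n ∉
      (Monoid.Coprod.inl : Multiplicative (ZMod 2) →* GG).range) :
    l • (QuotientGroup.mk x : Lam ⧸ Hsub) ≠ QuotientGroup.mk x := by
  intro h
  rw [MulAction.Quotient.smul_mk, QuotientGroup.eq] at h
  have h2 := inv_mem (mem_Hsub_iff.mp h n)
  apply hn
  convert h2 using 1
  simp only [smul_eq_mul, MulMemClass.coe_mul, InvMemClass.coe_inv, Pi.mul_apply, Pi.inv_apply]
  group

end Stmt9Aux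

open Stmt9Aux in
/-- For every `λ ∈ Λ` with `λ ≠ 1`, there are infinitely many cosets `i ∈ Λ/H` with
`λ · i ≠ i`, for the left translation action of `Λ` on `I = Λ/H`. -/
theorem stmt9 (l : Lam) (hl : l ≠ 1) :
    {i : Lam ⧸ Hsub | l • i ≠ i}.Infinite := by
  classical
  obtain ⟨n₀, hn₀⟩ : ∃ n, (l : ℕ → GG) n ≠ 1 := by
    by_contra h
    push_neg at h
    exact hl (Subtype.ext (funext fun n => h n))
  by_cases hcase : ∀ n, (l : ℕ → GG) n ∈
      (Monoid.Coprod.inl : Multiplicative (ZMod 2) →* GG).range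
  · -- every coordinate lies in the copy of ℤ/2; then `l n₀ = a`, conjugate at `n₀`
    have ha0 : (l : ℕ → GG) n₀ = a := by
      obtain ⟨x, hx⟩ := hcase n₀
      rcases (by decide : ∀ y : Multiplicative (ZMod 2),
          y = 1 ∨ y = Multiplicative.ofAdd 1) x with hy | hy
      · exact absurd (by rw [← hx, hy, map_one]) hn₀
      · rw [← hx, hy]; rfl
    apply Set.infinite_of_injective_forall_mem (xel_inj n₀)
    intro k
    apply moved (n := n₀)
    rw [xel_apply, if_pos rfl, ha0]
    exact conj_not_mem k
  · -- some coordinate `n₁` is outside the copy of ℤ/2; translate at `n₁ + 1`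
    push_neg at hcase
    obtain ⟨n₁, hn₁⟩ := hcase
    apply Set.infinite_of_injective_forall_mem (xel_inj (n₁ + 1))
    intro k
    apply moved (n := n₁)
    rw [xel_apply, if_neg (by omega)]
    simpa using hn₁
end

section
/- Let R be a countable nonsingular equivalence relation on X, G a locally compact second countable abelian group, Ω ∈ Z¹(R,G) a cocycle. If the skew-product R ×_Ω G is ergodic, then R is ergodic and the map sending p ∈ Ĝ (the Pontryagin dual) to the cohomology class of the 𝕋-valued cocycle (x,y) ↦ ⟨p, Ω(x,y)⟩ is injective on Ĝ. -/
open MeasureTheory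

variable {X : Type*} [MeasurableSpace X] {G : Type*} [CommGroup G]

/-- The skew product `R ×_Ω G` of an equivalence relation `R` on `X` by a `G`-valued
1-cocycle `Ω`: `((x,g),(y,h))` are related iff `(x,y) ∈ R` and `Ω(x,y) = g·h⁻¹`. -/
def skewProductRel (R : X → X → Prop) (Ω : X → X → G) : X × G → X × G → Prop :=
  fun p q => R p.1 q.1 ∧ Ω p.1 q.1 = p.2 * q.2⁻¹

/-- An equivalence relation is ergodic for `μ` if every invariant measurable set is
null or conull. -/
def ErgodicRel {Z : Type*} [MeasurableSpace Z] (μ : Measure Z) (R : Z → Z → Prop) : Prop :=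
  ∀ A : Set Z, MeasurableSet A → (∀ x y, R x y → (x ∈ A ↔ y ∈ A)) → μ A = 0 ∨ μ Aᶜ = 0

lemma aux_comm13 {H : Type*} [CommGroup H] {a b c d : H} (h : a * b⁻¹ = c * d⁻¹) :
    c * a⁻¹ = d * b⁻¹ := by
  rw [← div_eq_mul_inv, ← div_eq_mul_inv] at h ⊢
  rw [div_eq_div_iff_mul_eq_mul] at h ⊢
  rw [← h, mul_comm]

lemma aux_ae_const13 {Z : Type*} [MeasurableSpace Z] [MeasurableSpace Circle] [BorelSpace Circle]
    (m : Measure Z) (hm : m Set.univ ≠ 0) (f : Z → Circle)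
    (h : ∀ S : Set Circle, MeasurableSet S → m (f ⁻¹' S) = 0 ∨ m (f ⁻¹' S)ᶜ = 0) :
    ∃ c : Circle, ∀ᵐ z ∂m, f z = c := by
  obtain ⟨b, hbc, -, hb⟩ := TopologicalSpace.exists_countable_basis Circle
  set bad : Set (Set Circle) := {U ∈ b | m (f ⁻¹' U) = 0} with hbad
  set N : Set Circle := ⋃ U ∈ bad, U with hN
  have hNnull : m (f ⁻¹' N) = 0 := by
    rw [hN, Set.preimage_iUnion₂]
    exact (measure_biUnion_null_iff (hbc.mono (Set.sep_subset _ _))).2 fun U hU => hU.2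
  have huniq : ∀ y, y ∉ N → ∀ y', y' ∉ N → y = y' := by
    intro y hy y' hy'
    by_contra hne
    obtain ⟨V, V', hV, hV', hyV, hy'V', hdisj⟩ := t2_separation hne
    obtain ⟨U, hUb, hyU, hUV⟩ := hb.exists_subset_of_mem_open hyV hV
    obtain ⟨U', hU'b, hy'U', hU'V'⟩ := hb.exists_subset_of_mem_open hy'V' hV'
    have h1 : m (f ⁻¹' U) ≠ 0 := fun h0 => hy (Set.mem_biUnion ⟨hUb, h0⟩ hyU)
    have h2 : m (f ⁻¹' U') ≠ 0 := fun h0 => hy' (Set.mem_biUnion ⟨hU'b, h0⟩ hy'U')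
    rcases h U ((hb.isOpen hUb).measurableSet) with h0 | h0
    · exact h1 h0
    · refine h2 (measure_mono_null ?_ h0)
      intro z hz hzU
      exact hdisj.le_bot ⟨hUV hzU, hU'V' hz⟩
  have hex : ∃ c, c ∉ N := by
    by_contra hc
    push_neg at hc
    have huniv : f ⁻¹' N = Set.univ := Set.eq_univ_of_forall fun z => hc (f z)
    rw [huniv] at hNnull
    exact hm hNnull
  obtain ⟨c, hc⟩ := hex
  refine ⟨c, ae_iff.2 (measure_mono_null ?_ hNnull)⟩
  intro z hz
  by_contra hzN
  exact hz (huniq (f z) hzN c hc)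

/-- If the skew product `R ×_Ω G` (with respect to the product of the measure class of
`X` and the Haar measure class of the locally compact second countable abelian group `G`)
is ergodic, then `R` is ergodic and the map `p ↦ [Ω̂(p)]` from the Pontryagin dual `Ĝ`
to `H¹(R, 𝕋)` is injective. -/
theorem stmt13 [TopologicalSpace G] [IsTopologicalGroup G] [LocallyCompactSpace G]
    [SecondCountableTopology G] [MeasurableSpace G] [BorelSpace G]
    [MeasurableSpace Circle] [BorelSpace Circle]
    (μ : Measure X) [IsProbabilityMeasure μ]
    (ν : Measure G) [ν.IsHaarMeasure]
    (R : X → X → Prop) (hR : Equivalence R)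
    (Ω : X → X → G) (hΩm : Measurable fun p : X × X => Ω p.1 p.2)
    (hΩcoc : ∀ x y z, R x y → R y z → Ω x y * Ω y z = Ω x z)
    (herg : ErgodicRel (μ.prod ν) (skewProductRel R Ω)) :
    ErgodicRel μ R ∧
    ∀ p q : PontryaginDual G,
      (∃ u : X → Circle, Measurable u ∧
        ∀ x y, R x y → p (Ω x y) * (q (Ω x y))⁻¹ = u x * (u y)⁻¹) → p = q := by
  have hν : ν Set.univ ≠ 0 := (isOpen_univ.measure_pos ν ⟨1, trivial⟩).ne'
  constructor
  · -- ergodicity of R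
    intro A hA hinv
    have hprodinv : ∀ z w, skewProductRel R Ω z w →
        (z ∈ A ×ˢ (Set.univ : Set G) ↔ w ∈ A ×ˢ (Set.univ : Set G)) := by
      rintro z w ⟨hRzw, -⟩
      simp only [Set.mem_prod, Set.mem_univ, and_true]
      exact hinv _ _ hRzw
    rcases herg (A ×ˢ Set.univ) (hA.prod MeasurableSet.univ) hprodinv with h0 | h0
    · left
      rw [Measure.prod_prod] at h0
      rcases mul_eq_zero.mp h0 with h | h
      · exact h
      · exact absurd h hν
    · right
      have hcompl : (A ×ˢ (Set.univ : Set G))ᶜ = Aᶜ ×ˢ Set.univ := by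
        ext ⟨x, g⟩; simp
      rw [hcompl, Measure.prod_prod] at h0
      rcases mul_eq_zero.mp h0 with h | h
      · exact h
      · exact absurd h hν
  · -- injectivity
    rintro p q ⟨u, hu, huv⟩
    set φ : G → Circle := fun g => p g * (q g)⁻¹ with hφ
    have hφc : Continuous φ := (map_continuous p).mul ((map_continuous q).inv)
    have hφmul : ∀ g h, φ (g * h) = φ g * φ h := by
      intro g h
      simp only [hφ, map_mul, mul_inv]
      exact mul_mul_mul_comm _ _ _ _
    have hφinv : ∀ g, φ g⁻¹ = (φ g)⁻¹ := by
      intro g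
      simp only [hφ, map_inv, mul_inv, inv_inv, mul_comm]
    set f : X × G → Circle := fun z => u z.1 * (φ z.2)⁻¹ with hf
    have hfm : Measurable f := by
      have h1 : Measurable fun z : X × G => (u z.1, φ z.2) :=
        (hu.comp measurable_fst).prodMk (hφc.measurable.comp measurable_snd)
      exact ((continuous_fst.mul continuous_snd.inv).measurable).comp h1
    have hfinv : ∀ z w, skewProductRel R Ω z w → f z = f w := by
      rintro ⟨x, g⟩ ⟨y, h⟩ ⟨hRxy, hΩe⟩
      have key : φ g * (φ h)⁻¹ = u x * (u y)⁻¹ := by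
        have h2 := huv x y hRxy
        rw [hΩe] at h2
        calc φ g * (φ h)⁻¹ = φ (g * h⁻¹) := by rw [hφmul, hφinv]
        _ = u x * (u y)⁻¹ := h2
      exact aux_comm13 key
    have hm : (μ.prod ν) Set.univ ≠ 0 := by
      rw [← Set.univ_prod_univ, Measure.prod_prod, measure_univ, one_mul]
      exact hν
    obtain ⟨c, hc⟩ := aux_ae_const13 (μ.prod ν) hm f (fun S hS =>
      herg (f ⁻¹' S) (hfm hS) (fun z w hzw => by
        rw [Set.mem_preimage, Set.mem_preimage, hfinv z w hzw]))
    obtain ⟨x, hx⟩ := (Measure.ae_ae_of_ae_prod hc).exists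
    set d : Circle := u x * c⁻¹ with hd
    have hE : ∀ᵐ g ∂ν, φ g = d := by
      refine hx.mono fun g hg => ?_
      rw [hd, ← hg]
      show φ g = u x * (u x * (φ g)⁻¹)⁻¹
      rw [mul_inv_rev, inv_inv, mul_comm (φ g) (u x)⁻¹, ← mul_assoc, mul_inv_cancel, one_mul]
    set E : Set G := {g | φ g = d} with hEdef
    have hEc : ν Eᶜ = 0 := by
      rw [ae_iff] at hE
      exact hE
    have hEclosed : IsClosed E := isClosed_eq hφc continuous_const
    have hd1 : d = 1 := by
      have hexgh : ∃ g h : G, φ g = d ∧ φ h = d ∧ φ (g * h) = d := by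
        by_contra hcon
        push_neg at hcon
        have h1 : (ν.prod ν) (Eᶜ ×ˢ Set.univ) = 0 := by
          rw [Measure.prod_prod, hEc, zero_mul]
        have h2 : (ν.prod ν) (Set.univ ×ˢ Eᶜ) = 0 := by
          rw [Measure.prod_prod, hEc, mul_zero]
        have h3 : (ν.prod ν) ((fun z : G × G => z.1 * z.2) ⁻¹' Eᶜ) = 0 := by
          rw [Measure.prod_apply (continuous_mul.measurable hEclosed.measurableSet.compl)]
          have hpt : ∀ g : G, ν (Prod.mk g ⁻¹' ((fun z : G × G => z.1 * z.2) ⁻¹' Eᶜ)) = 0 := by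
            intro g
            have heq : Prod.mk g ⁻¹' ((fun z : G × G => z.1 * z.2) ⁻¹' Eᶜ) =
                (fun h => g * h) ⁻¹' Eᶜ := rfl
            rw [heq, measure_preimage_mul, hEc]
          calc ∫⁻ g, ν (Prod.mk g ⁻¹' ((fun z : G × G => z.1 * z.2) ⁻¹' Eᶜ)) ∂ν
              = ∫⁻ _, 0 ∂ν := lintegral_congr hpt
            _ = 0 := lintegral_zero
        have hcover : (Set.univ : Set (G × G)) ⊆
            (Eᶜ ×ˢ Set.univ ∪ Set.univ ×ˢ Eᶜ) ∪ ((fun z : G × G => z.1 * z.2) ⁻¹' Eᶜ) := by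
          rintro ⟨g, h⟩ -
          by_contra hz
          simp only [Set.mem_union, Set.mem_prod, Set.mem_univ, and_true, true_and,
            Set.mem_preimage, Set.mem_compl_iff, not_or, not_not] at hz
          exact hcon g h hz.1.1 hz.1.2 hz.2
        have hzero : (ν.prod ν) Set.univ = 0 :=
          measure_mono_null hcover (measure_union_null (measure_union_null h1 h2) h3)
        rw [← Set.univ_prod_univ, Measure.prod_prod] at hzero
        rcases mul_eq_zero.mp hzero with h | h
        · exact hν h
        · exact hν h
      obtain ⟨g, h, hg, hh, hgh⟩ := hexgh
      have h5 := hφmul g h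
      rw [hgh, hg, hh] at h5
      exact mul_eq_right.mp h5.symm
    have hall : ∀ g, φ g = 1 := by
      intro g
      by_contra hg
      have hgE : g ∈ Eᶜ := by
        simp only [hEdef, Set.mem_compl_iff, Set.mem_setOf_eq, hd1]
        exact hg
      exact absurd hEc (hEclosed.isOpen_compl.measure_pos ν ⟨g, hgE⟩).ne'
    refine DFunLike.ext p q fun g => ?_
    have := hall g
    simp only [hφ] at this
    exact mul_inv_eq_one.mp this
end
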